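/- arXiv:1411.6596 — 3 statements merged into one kernel-verified Lean document; each statement's English description precedes it below -/
import Mathlib

section
/- For all integers 1 ≤ k ≤ N and every p ∈ [0,1], the probability that the Erdős–Rényi random graph G_{N,p} contains a vertex set S with |S| = k spanning at least 2k edges (i.e., with e(S) ≥ 2k, where e(S) is the number of edges with both endpoints in S) is at most ( k e³ (Np)² / (2N) )^k. -/
open MeasureTheory Filter Real ENNReal

noncomputable section

/-- Euclidean distance between two points of `ℝ^d` represented as functions `Fin d → ℝ`. -/
def eucDist {d : ℕ} (x y : Fin d → ℝ) : ℝ := Real.sqrt (∑ i, (x i - y i) ^ 2)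

lemma eucDist_symm {d : ℕ} (x y : Fin d → ℝ) : eucDist x y = eucDist y x := by
  unfold eucDist
  congr 1
  exact Finset.sum_congr rfl fun i _ => by rw [← neg_sub, neg_sq]

/-- The weight of an unordered pair of vertices: the Euclidean distance between the
corresponding embedded points. -/
def pairWeight {V : Type*} {d : ℕ} (X : V → (Fin d → ℝ)) : Sym2 V → ℝ :=
  Sym2.lift ⟨fun i j => eucDist (X i) (X j), fun _ _ => eucDist_symm _ _⟩

/-- The simple graph determined by a Boolean indicator of which unordered pairs are edges. -/
def graphOf {V : Type*} (e : Sym2 V → Bool) : SimpleGraph V where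
  Adj i j := i ≠ j ∧ e s(i, j)
  symm := ⟨fun i j h => by
    obtain ⟨h1, h2⟩ := h
    exact ⟨h1.symm, by rwa [Sym2.eq_swap]⟩⟩
  loopless := ⟨fun i h => h.1 rfl⟩

/-- The total weight of a walk: the sum of the weights of its edges. -/
def walkCost {V : Type*} {G : SimpleGraph V} {u v : V} (w : Sym2 V → ℝ) (p : G.Walk u v) : ℝ :=
  (p.edges.map w).sum

/-- Weighted graph distance: the infimum of the weights of walks joining the two vertices,
equal to `∞` if there is no such walk. -/
def graphDist {V : Type*} (G : SimpleGraph V) (w : Sym2 V → ℝ) (u v : V) : ℝ≥0∞ :=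
  ⨅ (p : G.Walk u v), ENNReal.ofReal (walkCost w p)

/-- `G` has a Hamiltonian cycle. -/
def HasHamCycle {V : Type*} (G : SimpleGraph V) : Prop :=
  letI := Classical.decEq V
  ∃ (v : V) (c : G.Walk v v), c.IsHamiltonianCycle

/-- The minimum total weight of a Hamiltonian cycle of `G`, with the default value `dflt`
when `G` has no Hamiltonian cycle. -/
def TSP {V : Type*} (G : SimpleGraph V) (w : Sym2 V → ℝ) (dflt : ℝ) : ℝ :=
  letI := Classical.decEq V
  letI := Classical.propDecidable
  if (∃ (v : V) (c : G.Walk v v), c.IsHamiltonianCycle) then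
    sInf {x | ∃ (v : V) (c : G.Walk v v), c.IsHamiltonianCycle ∧ x = walkCost w c}
  else dflt

/-- The uniform distribution on the unit cube `[0,1]^d`. -/
def unifCube (d : ℕ) : Measure (Fin d → ℝ) := volume.restrict (Set.Icc 0 1)

instance (d : ℕ) : IsProbabilityMeasure (unifCube d) := by
  constructor
  rw [unifCube, Measure.restrict_apply_univ, Real.volume_Icc_pi]
  simp

/-- The Bernoulli distribution on `Bool` with success probability `p` (truncated at `1`). -/
def bern (p : ℝ) : Measure Bool :=
  (PMF.bernoulli (min (Real.toNNReal p) 1) (min_le_right _ _)).toMeasure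

instance (p : ℝ) : IsProbabilityMeasure (bern p) := PMF.toMeasure.isProbabilityMeasure _

/-- The law of the random weighted graph `𝒳_{n,p}`: `n` independent uniform points in the
unit cube `[0,1]^d`, together with independent Bernoulli(p) indicators, one for each
unordered pair of vertices. -/
def XMeasure (d n : ℕ) (p : ℝ) :
    Measure ((Fin n → (Fin d → ℝ)) × (Sym2 (Fin n) → Bool)) :=
  (Measure.pi fun _ => unifCube d).prod (Measure.pi fun _ => bern p)

instance (d n : ℕ) (p : ℝ) : IsProbabilityMeasure (XMeasure d n p) := by
  unfold XMeasure; infer_instance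

/-- The law of the Erdős–Rényi random graph `G_{n,q}`: independent Bernoulli(q)
indicators, one for each unordered pair of vertices. -/
def ERMeasure (n : ℕ) (q : ℝ) : Measure (Sym2 (Fin n) → Bool) :=
  Measure.pi fun _ => bern q

instance (n : ℕ) (q : ℝ) : IsProbabilityMeasure (ERMeasure n q) := by
  unfold ERMeasure; infer_instance

lemma aux_bern_true {p : ℝ} (hp1 : p ≤ 1) : bern p {true} = ENNReal.ofReal p := by
  rw [bern, PMF.toMeasure_apply_singleton _ _ (measurableSet_singleton _),
    PMF.bernoulli_apply]
  simp [min_eq_left (Real.toNNReal_le_one.mpr hp1), ENNReal.ofReal]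

lemma aux_cyl_measure (N : ℕ) {p : ℝ} (hp1 : p ≤ 1) (T : Finset (Sym2 (Fin N))) :
    ERMeasure N p {x | ∀ e ∈ T, x e = true} = ENNReal.ofReal p ^ T.card := by
  classical
  have hset : {x : Sym2 (Fin N) → Bool | ∀ e ∈ T, x e = true}
      = Set.pi Set.univ (fun e => if e ∈ T then ({true} : Set Bool) else Set.univ) := by
    ext x
    simp only [Set.mem_setOf_eq, Set.mem_pi, Set.mem_univ, forall_true_left]
    constructor
    · intro h e
      split_ifs with he
      · exact h e he
      · trivial
    · intro h e he
      have := h e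
      rwa [if_pos he] at this
  rw [ERMeasure, hset, Measure.pi_pi]
  have hval : ∀ e : Sym2 (Fin N),
      (bern p) (if e ∈ T then ({true} : Set Bool) else Set.univ)
        = if e ∈ T then ENNReal.ofReal p else 1 := by
    intro e
    split_ifs
    · exact aux_bern_true hp1
    · exact measure_univ
  simp_rw [hval]
  rw [Finset.prod_ite_mem, Finset.univ_inter, Finset.prod_const]

lemma aux_choose_le (n k : ℕ) (hk : 1 ≤ k) :
    (n.choose k : ℝ) ≤ (Real.exp 1 * n / k) ^ k := by
  have hkpos : (0 : ℝ) < k := by exact_mod_cast hk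
  have hfac : (0 : ℝ) < k.factorial := by exact_mod_cast k.factorial_pos
  have h1 : (n.choose k : ℝ) * k.factorial ≤ (n : ℝ) ^ k := by
    have h := Nat.descFactorial_le_pow n k
    rw [Nat.descFactorial_eq_factorial_mul_choose] at h
    have := (Nat.cast_le (α := ℝ)).2 h
    push_cast at this
    linarith
  have h2 : (k : ℝ) ^ k ≤ Real.exp 1 ^ k * k.factorial := by
    have hs := Real.sum_le_exp_of_nonneg (le_of_lt hkpos) (k + 1)
    have hterm : (k : ℝ) ^ k / k.factorial ≤ Real.exp k :=
      le_trans (Finset.single_le_sum (f := fun i => (k : ℝ) ^ i / i.factorial)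
        (fun i _ => by positivity) (Finset.self_mem_range_succ k)) hs
    rw [div_le_iff₀ hfac] at hterm
    rw [Real.exp_one_pow]
    exact hterm
  have hc0 : (0 : ℝ) ≤ (n.choose k : ℝ) := by positivity
  have he0 : (0 : ℝ) ≤ Real.exp 1 ^ k := by positivity
  have step : (n.choose k : ℝ) * (k : ℝ) ^ k ≤ Real.exp 1 ^ k * (n : ℝ) ^ k := by
    calc (n.choose k : ℝ) * (k : ℝ) ^ k
        ≤ (n.choose k : ℝ) * (Real.exp 1 ^ k * k.factorial) :=
          mul_le_mul_of_nonneg_left h2 hc0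
      _ = Real.exp 1 ^ k * ((n.choose k : ℝ) * k.factorial) := by ring
      _ ≤ Real.exp 1 ^ k * (n : ℝ) ^ k := mul_le_mul_of_nonneg_left h1 he0
  rw [div_pow, mul_pow, le_div_iff₀ (by positivity)]
  exact step

lemma aux_real (N k : ℕ) (hk1 : 1 ≤ k) (hkN : k ≤ N) (p : ℝ) (hp0 : 0 ≤ p) :
    (N.choose k : ℝ) * ((k ^ 2).choose (2 * k) : ℝ) * p ^ (2 * k)
      ≤ (k * Real.exp 3 * ((N : ℝ) * p) ^ 2 / (2 * N)) ^ k := by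
  have hk0 : (0 : ℝ) < k := by exact_mod_cast hk1
  have hN0 : (0 : ℝ) < N := lt_of_lt_of_le hk0 (by exact_mod_cast hkN)
  have hA := aux_choose_le N k hk1
  have hB := aux_choose_le (k ^ 2) (2 * k) (by omega)
  have hbase : Real.exp 1 * ((k ^ 2 : ℕ) : ℝ) / ((2 * k : ℕ) : ℝ)
      = Real.exp 1 * k / 2 := by
    push_cast
    field_simp
  rw [hbase] at hB
  have hmul : (N.choose k : ℝ) * ((k ^ 2).choose (2 * k) : ℝ) * p ^ (2 * k)
      ≤ (Real.exp 1 * N / k) ^ k * (Real.exp 1 * k / 2) ^ (2 * k) * p ^ (2 * k) := by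
    apply mul_le_mul_of_nonneg_right _ (by positivity)
    exact mul_le_mul hA hB (by positivity) (by positivity)
  refine hmul.trans ?_
  have hrw : (Real.exp 1 * N / k) ^ k * (Real.exp 1 * k / 2) ^ (2 * k) * p ^ (2 * k)
      = (Real.exp 1 * N / k * (Real.exp 1 * k / 2) ^ 2 * p ^ 2) ^ k := by
    rw [pow_mul, pow_mul, ← mul_pow, ← mul_pow]
  rw [hrw]
  apply pow_le_pow_left₀ (by positivity)
  have he3 : Real.exp 3 = Real.exp 1 ^ 3 := by
    rw [Real.exp_one_pow]
    norm_num
  have hrhs : (k : ℝ) * Real.exp 3 * ((N : ℝ) * p) ^ 2 / (2 * N)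
      = Real.exp 1 ^ 3 * k * N * p ^ 2 / 2 := by
    rw [he3]
    field_simp
  have hlhs : Real.exp 1 * N / k * (Real.exp 1 * k / 2) ^ 2 * p ^ 2
      = Real.exp 1 ^ 3 * k * N * p ^ 2 / 4 := by
    field_simp
    ring
  rw [hrhs, hlhs]
  have hnn : (0 : ℝ) ≤ Real.exp 1 ^ 3 * k * N * p ^ 2 := by positivity
  linarith

/-- Lemma (dense subsets): for all `1 ≤ k ≤ N` and `p ∈ [0,1]`, the probability that
`G_{N,p}` contains a vertex set `S` with `|S| = k` spanning at least `2k` edges is at most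
`(k e³ (Np)² / (2N))^k`. -/
theorem dense_subset_probability (N k : ℕ) (hk1 : 1 ≤ k) (hkN : k ≤ N)
    (p : ℝ) (hp0 : 0 ≤ p) (hp1 : p ≤ 1) :
    ERMeasure N p
      {x | ∃ S : Finset (Fin N), S.card = k ∧
        2 * k ≤ {e : Sym2 (Fin N) | ¬e.IsDiag ∧ (∀ v ∈ e, v ∈ S) ∧ x e = true}.ncard}
      ≤ ENNReal.ofReal ((k * Real.exp 3 * ((N : ℝ) * p) ^ 2 / (2 * N)) ^ k) := by
  classical
  set μ := ERMeasure N p with hμ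
  set F : Finset (Fin N) → Finset (Sym2 (Fin N)) :=
    fun S => Finset.univ.filter (fun e => ¬e.IsDiag ∧ ∀ v ∈ e, v ∈ S) with hF
  have hFcard : ∀ S : Finset (Fin N), S.card = k → (F S).card ≤ k ^ 2 := by
    intro S hS
    have hsub : F S ⊆ (S ×ˢ S).image (fun ab : Fin N × Fin N => s(ab.1, ab.2)) := by
      intro e
      induction e using Sym2.ind with
      | _ a b =>
        intro he
        simp only [hF, Finset.mem_filter] at he
        obtain ⟨-, -, hm⟩ := he
        exact Finset.mem_image.2 ⟨(a, b), Finset.mem_product.2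
          ⟨hm a (Sym2.mem_mk_left a b), hm b (Sym2.mem_mk_right a b)⟩, rfl⟩
    calc (F S).card ≤ ((S ×ˢ S).image (fun ab : Fin N × Fin N => s(ab.1, ab.2))).card :=
          Finset.card_le_card hsub
      _ ≤ (S ×ˢ S).card := Finset.card_image_le
      _ = k ^ 2 := by rw [Finset.card_product, hS]; ring
  have hS_bound : ∀ S : Finset (Fin N), S.card = k →
      μ {x | 2 * k ≤ {e : Sym2 (Fin N) | ¬e.IsDiag ∧ (∀ v ∈ e, v ∈ S) ∧ x e = true}.ncard}
        ≤ ((k ^ 2).choose (2 * k) : ℝ≥0∞) * ENNReal.ofReal p ^ (2 * k) := by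
    intro S hS
    have hsub : {x : Sym2 (Fin N) → Bool |
        2 * k ≤ {e : Sym2 (Fin N) | ¬e.IsDiag ∧ (∀ v ∈ e, v ∈ S) ∧ x e = true}.ncard}
        ⊆ ⋃ T ∈ (F S).powersetCard (2 * k), {x : Sym2 (Fin N) → Bool | ∀ e ∈ T, x e = true} := by
      intro x hx
      simp only [Set.mem_setOf_eq] at hx
      have hset : {e : Sym2 (Fin N) | ¬e.IsDiag ∧ (∀ v ∈ e, v ∈ S) ∧ x e = true}
          = ↑((F S).filter (fun e => x e = true)) := by
        ext e
        simp [hF, and_assoc]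
      rw [hset, Set.ncard_coe_finset] at hx
      obtain ⟨T, hTsub, hTcard⟩ := Finset.exists_subset_card_eq hx
      refine Set.mem_biUnion (Finset.mem_powersetCard.2
        ⟨hTsub.trans (Finset.filter_subset _ _), hTcard⟩) ?_
      intro e he
      exact (Finset.mem_filter.1 (hTsub he)).2
    calc μ {x | 2 * k ≤ {e : Sym2 (Fin N) |
            ¬e.IsDiag ∧ (∀ v ∈ e, v ∈ S) ∧ x e = true}.ncard}
        ≤ μ (⋃ T ∈ (F S).powersetCard (2 * k),
            {x : Sym2 (Fin N) → Bool | ∀ e ∈ T, x e = true}) := measure_mono hsub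
      _ ≤ ∑ T ∈ (F S).powersetCard (2 * k),
            μ {x : Sym2 (Fin N) → Bool | ∀ e ∈ T, x e = true} :=
          measure_biUnion_finset_le _ _
      _ = ∑ _T ∈ (F S).powersetCard (2 * k), ENNReal.ofReal p ^ (2 * k) :=
          Finset.sum_congr rfl (fun T hT => by
            rw [hμ, aux_cyl_measure N hp1 T, (Finset.mem_powersetCard.1 hT).2])
      _ = ((F S).card.choose (2 * k) : ℝ≥0∞) * ENNReal.ofReal p ^ (2 * k) := by
          rw [Finset.sum_const, Finset.card_powersetCard, nsmul_eq_mul]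
      _ ≤ ((k ^ 2).choose (2 * k) : ℝ≥0∞) * ENNReal.ofReal p ^ (2 * k) :=
          mul_le_mul_left
            (Nat.cast_le.2 (Nat.choose_le_choose _ (hFcard S hS))) _
  have hcover : {x : Sym2 (Fin N) → Bool | ∃ S : Finset (Fin N), S.card = k ∧
      2 * k ≤ {e : Sym2 (Fin N) | ¬e.IsDiag ∧ (∀ v ∈ e, v ∈ S) ∧ x e = true}.ncard}
      ⊆ ⋃ S ∈ Finset.univ.powersetCard k, {x : Sym2 (Fin N) → Bool |
        2 * k ≤ {e : Sym2 (Fin N) | ¬e.IsDiag ∧ (∀ v ∈ e, v ∈ S) ∧ x e = true}.ncard} := by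
    rintro x ⟨S, hSk, hx⟩
    exact Set.mem_biUnion (Finset.mem_powersetCard_univ.2 hSk) hx
  calc μ {x | ∃ S : Finset (Fin N), S.card = k ∧
        2 * k ≤ {e : Sym2 (Fin N) | ¬e.IsDiag ∧ (∀ v ∈ e, v ∈ S) ∧ x e = true}.ncard}
      ≤ μ (⋃ S ∈ Finset.univ.powersetCard k, {x : Sym2 (Fin N) → Bool |
          2 * k ≤ {e : Sym2 (Fin N) | ¬e.IsDiag ∧ (∀ v ∈ e, v ∈ S) ∧ x e = true}.ncard}) :=
        measure_mono hcover
    _ ≤ ∑ S ∈ Finset.univ.powersetCard k, μ {x : Sym2 (Fin N) → Bool |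
          2 * k ≤ {e : Sym2 (Fin N) | ¬e.IsDiag ∧ (∀ v ∈ e, v ∈ S) ∧ x e = true}.ncard} :=
        measure_biUnion_finset_le _ _
    _ ≤ ∑ _S ∈ Finset.univ.powersetCard k,
          ((k ^ 2).choose (2 * k) : ℝ≥0∞) * ENNReal.ofReal p ^ (2 * k) :=
        Finset.sum_le_sum fun S hS => hS_bound S (Finset.mem_powersetCard_univ.1 hS)
    _ = (N.choose k : ℝ≥0∞) * (((k ^ 2).choose (2 * k) : ℝ≥0∞) * ENNReal.ofReal p ^ (2 * k)) := by
        rw [Finset.sum_const, Finset.card_powersetCard, Finset.card_univ,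
          Fintype.card_fin, nsmul_eq_mul]
    _ = ENNReal.ofReal ((N.choose k : ℝ) * ((k ^ 2).choose (2 * k) : ℝ) * p ^ (2 * k)) := by
        rw [ENNReal.ofReal_mul (by positivity), ENNReal.ofReal_mul (by positivity),
          ENNReal.ofReal_pow hp0, ENNReal.ofReal_natCast, ENNReal.ofReal_natCast, mul_assoc]
    _ ≤ ENNReal.ofReal ((k * Real.exp 3 * ((N : ℝ) * p) ^ 2 / (2 * N)) ^ k) :=
        ENNReal.ofReal_le_ofReal (aux_real N k hk1 hkN p hp0)

end
end

section
/- Fix an integer d ≥ 2 and let ν_d denote the volume of the d-dimensional Euclidean unit ball. For any p = p(n) ∈ (0,1], the following holds quite surely (with failure probability O(n^{−K}) for every constant K > 0): every Hamiltonian cycle of the graph 𝒳_{n,p} (if one exists) has total edge weight at least e^{−ν_d} n^{(d−1)/d} / (4 p^{1/d}). -/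
open MeasureTheory Filter Real ENNReal

noncomputable section

/-- The volume of the `d`-dimensional Euclidean unit ball. -/
def unitBallVol (d : ℕ) : ℝ :=
  (volume (Metric.ball (0 : EuclideanSpace ℝ (Fin d)) 1)).toReal


/-! ### Auxiliary lemmas -/

lemma pow_self_le_exp_mul_factorial (m : ℕ) : (m:ℝ)^m ≤ Real.exp 1 ^ m * m.factorial := by
  induction m with
  | zero => simp
  | succ k ih =>
      have h1 : ((k+1:ℕ):ℝ)^k ≤ Real.exp 1 * (k:ℝ)^k := by
        rcases Nat.eq_zero_or_pos k with hk | hk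
        · subst hk; simp
        · have hk' : (0:ℝ) < k := by exact_mod_cast hk
          have hkk : ((k+1:ℕ):ℝ) = k * (1 + 1/(k:ℝ)) := by push_cast; field_simp
          rw [hkk, mul_pow]
          have h2 : (1 + 1/(k:ℝ))^k ≤ Real.exp 1 := by
            have := Real.add_one_le_exp (1/(k:ℝ))
            calc (1 + 1/(k:ℝ))^k ≤ Real.exp (1/(k:ℝ)) ^ k := by
                  apply pow_le_pow_left₀ (by positivity) (by linarith)
              _ = Real.exp (k * (1/(k:ℝ))) := by rw [← Real.exp_nat_mul]
              _ = Real.exp 1 := by field_simp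
          calc (k:ℝ)^k * (1 + 1/(k:ℝ))^k ≤ (k:ℝ)^k * Real.exp 1 :=
                mul_le_mul_of_nonneg_left h2 (by positivity)
            _ = Real.exp 1 * (k:ℝ)^k := mul_comm _ _
      calc ((k+1:ℕ):ℝ)^(k+1) = ((k+1:ℕ):ℝ) * ((k+1:ℕ):ℝ)^k := by ring
        _ ≤ ((k+1:ℕ):ℝ) * (Real.exp 1 * (k:ℝ)^k) := by
            apply mul_le_mul_of_nonneg_left h1 (by positivity)
        _ ≤ ((k+1:ℕ):ℝ) * (Real.exp 1 * (Real.exp 1 ^ k * k.factorial)) := by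
            gcongr
        _ = Real.exp 1 ^ (k+1) * ((k+1) * k.factorial) := by push_cast; ring
        _ = Real.exp 1 ^ (k+1) * (k+1).factorial := by rw [Nat.factorial_succ]; push_cast; ring

lemma nu_exp_bound (d : ℕ) (hd : 2 ≤ d) (v : ℝ) (hv : 0 ≤ v) :
    v * Real.exp (-(d:ℝ) * v) ≤ 1 / (2 * Real.exp 1) := by
  have hd' : (2:ℝ) ≤ (d:ℝ) := by exact_mod_cast hd
  have h1 : Real.exp (-(d:ℝ)*v) ≤ Real.exp (-2*v) := by
    apply Real.exp_le_exp.2; nlinarith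
  have he : (0:ℝ) < Real.exp 1 := Real.exp_pos 1
  have hee : (0:ℝ) < Real.exp (2*v) := Real.exp_pos _
  have h2 : v * Real.exp (-2*v) ≤ 1 / (2 * Real.exp 1) := by
    have h3 := Real.add_one_le_exp (2*v - 1)
    have h4 : Real.exp (2*v - 1) = Real.exp (2*v) / Real.exp 1 := Real.exp_sub _ _
    have h5 : 2*v*Real.exp 1 ≤ Real.exp (2*v) := by
      rw [h4] at h3
      calc 2*v*Real.exp 1 ≤ (Real.exp (2*v)/Real.exp 1) * Real.exp 1 := by nlinarith
        _ = Real.exp (2*v) := by field_simp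
    have h6 : Real.exp (-2*v) = (Real.exp (2*v))⁻¹ := by
      rw [← Real.exp_neg]; ring_nf
    rw [h6, ← div_eq_mul_inv, div_le_div_iff₀ hee (by positivity)]
    nlinarith
  calc v * Real.exp (-(d:ℝ)*v) ≤ v * Real.exp (-2*v) := mul_le_mul_of_nonneg_left h1 hv
    _ ≤ _ := h2

lemma walkCost_eq_sum {V : Type*} {G : SimpleGraph V} (w : Sym2 V → ℝ) :
    ∀ {a b : V} (p : G.Walk a b),
      walkCost w p = ∑ i ∈ Finset.range p.length, w s(p.getVert i, p.getVert (i+1)) := by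
  intro a b p
  induction p with
  | nil => simp [walkCost]
  | @cons x y z hadj q ih =>
      have hlen : (SimpleGraph.Walk.cons hadj q).length = q.length + 1 := by simp
      rw [hlen, Finset.sum_range_succ']
      simp only [SimpleGraph.Walk.getVert_cons_succ, SimpleGraph.Walk.getVert_zero]
      have h0 : walkCost w (SimpleGraph.Walk.cons hadj q) = w s(x, y) + walkCost w q := by
        simp [walkCost]
      rw [h0, ih]
      ring

lemma getVert_eq_support_getElem' {V : Type*} {G : SimpleGraph V} :
    ∀ {a b : V} (p : G.Walk a b) (i : ℕ) (h : i < p.support.length),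
      p.getVert i = p.support[i] := by
  intro a b p
  induction p with
  | nil => intro i h; simp at h; subst h; simp
  | @cons x y z hadj q ih =>
      intro i h
      cases i with
      | zero => simp
      | succ k =>
          simp only [SimpleGraph.Walk.support_cons, List.length_cons] at h ⊢
          rw [SimpleGraph.Walk.getVert_cons_succ]
          rw [ih k (by omega)]
          simp

lemma hamCycle_getVert_inj {V : Type*} [DecidableEq V] [Fintype V] {G : SimpleGraph V} {v : V}
    {c : G.Walk v v} (hc : c.IsHamiltonianCycle) {i j : ℕ}
    (hi : i < c.length) (hj : j < c.length) (hij : c.getVert i = c.getVert j) : i = j := by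
  have hnd : c.support.tail.Nodup := hc.isCycle.support_nodup
  have hlen : c.support.length = c.length + 1 := SimpleGraph.Walk.length_support c
  have hsupp : c.support = v :: c.support.tail := SimpleGraph.Walk.support_eq_cons c
  have htl : c.support.tail.length = c.length := by
    rw [List.length_tail, hlen]; omega
  have hg : ∀ k, 1 ≤ k → ∀ hk2 : k ≤ c.length, c.getVert k = c.support.tail[k-1]'(by omega) := by
    intro k hk1 hk2
    have h1 : c.getVert k = c.support[k]'(by omega) :=
      getVert_eq_support_getElem' c k (by omega)
    rw [h1, List.getElem_of_eq hsupp]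
    cases k with
    | zero => omega
    | succ k' => simp
  have hvlast : c.getVert c.length = v := SimpleGraph.Walk.getVert_length c
  have hlen1 : 1 ≤ c.length := by omega
  rcases Nat.eq_zero_or_pos i with hi0 | hi1 <;> rcases Nat.eq_zero_or_pos j with hj0 | hj1
  · omega
  · exfalso
    subst hi0
    have hv1 : c.getVert j = v := hij.symm.trans c.getVert_zero
    rw [hg j hj1 (by omega)] at hv1
    rw [hg c.length hlen1 le_rfl] at hvlast
    have := (List.Nodup.getElem_inj_iff hnd).1 (hv1.trans hvlast.symm)
    omega
  · exfalso
    subst hj0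
    have hv1 : c.getVert i = v := hij.trans c.getVert_zero
    rw [hg i hi1 (by omega)] at hv1
    rw [hg c.length hlen1 le_rfl] at hvlast
    have := (List.Nodup.getElem_inj_iff hnd).1 (hv1.trans hvlast.symm)
    omega
  · have e1 := hg i hi1 (by omega)
    have e2 := hg j hj1 (by omega)
    rw [e1, e2] at hij
    have := (List.Nodup.getElem_inj_iff hnd).1 hij
    omega

lemma pairWeight_mk {V : Type*} {d : ℕ} (X : V → (Fin d → ℝ)) (i j : V) :
    pairWeight X s(i, j) = eucDist (X i) (X j) := rfl

lemma pairWeight_nonneg {V : Type*} {d : ℕ} (X : V → (Fin d → ℝ)) (z : Sym2 V) :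
    0 ≤ pairWeight X z :=
  z.inductionOn fun _ _ => Real.sqrt_nonneg _

lemma continuous_eucDist {d : ℕ} (cen : Fin d → ℝ) :
    Continuous fun x : Fin d → ℝ => eucDist x cen :=
  Real.continuous_sqrt.comp <| continuous_finset_sum _ fun i _ =>
    ((continuous_apply i).sub continuous_const).pow 2

lemma measurableSet_eucDist_lt {d : ℕ} (cen : Fin d → ℝ) (r : ℝ) :
    MeasurableSet {x : Fin d → ℝ | eucDist x cen < r} :=
  (isOpen_lt (continuous_eucDist cen) continuous_const).measurableSet

lemma volume_eucDist_lt {d : ℕ} (hd : 1 ≤ d) (cen : Fin d → ℝ) {r : ℝ} (hr : 0 ≤ r) :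
    volume {x : Fin d → ℝ | eucDist x cen < r} = ENNReal.ofReal (unitBallVol d * r ^ d) := by
  haveI : Nonempty (Fin d) := ⟨⟨0, by omega⟩⟩
  haveI : Nontrivial (EuclideanSpace ℝ (Fin d)) := inferInstance
  set A := {x : Fin d → ℝ | eucDist x cen < r} with hA
  have hAmeas : MeasurableSet A := measurableSet_eucDist_lt cen r
  have MP := EuclideanSpace.volume_preserving_symm_measurableEquiv_toLp (Fin d)
  have h1 : volume (((MeasurableEquiv.toLp 2 (Fin d → ℝ)).symm) ⁻¹' A) = volume A :=
    MP.measure_preimage hAmeas.nullMeasurableSet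
  set cen' : EuclideanSpace ℝ (Fin d) := (EuclideanSpace.equiv (Fin d) ℝ).symm cen with hcen
  have h2 : ((MeasurableEquiv.toLp 2 (Fin d → ℝ)).symm) ⁻¹' A = Metric.ball cen' r := by
    ext y
    simp only [Set.mem_preimage, hA, Set.mem_setOf_eq, Metric.mem_ball,
      EuclideanSpace.dist_eq, Real.dist_eq, sq_abs, eucDist]
    rfl
  rw [h2] at h1
  rw [← h1, Measure.addHaar_ball volume cen' hr, finrank_euclideanSpace_fin,
    show volume (Metric.ball (0 : EuclideanSpace ℝ (Fin d)) 1) = ENNReal.ofReal (unitBallVol d)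
      from (ENNReal.ofReal_toReal measure_ball_lt_top.ne).symm,
    ← ENNReal.ofReal_mul (pow_nonneg hr d), mul_comm]

lemma unifCube_ball_le {d : ℕ} (hd : 1 ≤ d) (cen : Fin d → ℝ) {r : ℝ} (hr : 0 ≤ r) :
    unifCube d {x | eucDist x cen < r} ≤ ENNReal.ofReal (unitBallVol d * r ^ d) := by
  rw [unifCube, Measure.restrict_apply (measurableSet_eucDist_lt cen r)]
  exact le_of_le_of_eq (measure_mono Set.inter_subset_left) (volume_eucDist_lt hd cen hr)

lemma bern_pi_le {n : ℕ} {p : ℝ} (hp1 : p ≤ 1) (M : Finset (Sym2 (Fin n))) :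
    (Measure.pi fun _ : Sym2 (Fin n) => bern p) {e | ∀ pr ∈ M, e pr = true}
      ≤ ENNReal.ofReal p ^ M.card := by
  have hset : {e : Sym2 (Fin n) → Bool | ∀ pr ∈ M, e pr = true}
      = Set.pi Set.univ (fun pr => if pr ∈ M then {true} else Set.univ) := by
    ext e
    simp only [Set.mem_setOf_eq, Set.mem_pi, Set.mem_univ, forall_true_left]
    constructor
    · intro h pr
      by_cases hpr : pr ∈ M
      · simp [hpr, h pr hpr]
      · simp [hpr]
    · intro h pr hpr
      have := h pr
      simpa [hpr] using this
  rw [hset, Measure.pi_pi]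
  have hb : bern p {true} = ENNReal.ofReal p := by
    rw [bern, PMF.toMeasure_apply_singleton _ _ (measurableSet_singleton _)]
    simp [min_eq_left (Real.toNNReal_le_one.2 hp1), ENNReal.ofReal, PMF.bernoulli_apply]
  have hpt : ∀ pr : Sym2 (Fin n),
      bern p (if pr ∈ M then ({true} : Set Bool) else Set.univ)
        = if pr ∈ M then ENNReal.ofReal p else 1 := by
    intro pr
    by_cases hpr : pr ∈ M
    · simp [hpr, hb]
    · simp only [hpr, if_false]; exact measure_univ
  rw [Finset.prod_congr rfl (fun pr _ => hpt pr), Finset.prod_ite_mem,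
    Finset.univ_inter, Finset.prod_const]

lemma pi_matching_le {d n : ℕ} (hd : 1 ≤ d) {r : ℝ} (hr : 0 ≤ r)
    (M : Finset (Sym2 (Fin n)))
    (hdiag : ∀ pr ∈ M, ¬ pr.IsDiag)
    (hdisj : ∀ pr ∈ M, ∀ pr' ∈ M, pr ≠ pr' → ∀ v : Fin n, v ∈ pr → v ∉ pr') :
    (Measure.pi fun _ : Fin n => unifCube d) {X | ∀ pr ∈ M, pairWeight X pr < r}
      ≤ ENNReal.ofReal (unitBallVol d * r ^ d) ^ M.card := by
  have hrep : ∀ z : Sym2 (Fin n), ∃ q : Fin n × Fin n, z = s(q.1, q.2) := fun z =>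
    z.inductionOn fun x y => ⟨(x, y), rfl⟩
  set a : Sym2 (Fin n) → Fin n := fun z => (Classical.choose (hrep z)).1 with ha
  set b : Sym2 (Fin n) → Fin n := fun z => (Classical.choose (hrep z)).2 with hb
  have hab : ∀ z, z = s(a z, b z) := fun z => Classical.choose_spec (hrep z)
  have hmem_a : ∀ z, a z ∈ z := fun z => by
    have := Sym2.mem_mk_left (a z) (b z); rwa [← hab z] at this
  have hmem_b : ∀ z, b z ∈ z := fun z => by
    have := Sym2.mem_mk_right (a z) (b z); rwa [← hab z] at this
  set pA : Fin n → Prop := fun i => ∃ z ∈ M, a z = i with hpA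
  letI dp : DecidablePred pA := Classical.decPred pA
  set q0 := ENNReal.ofReal (unitBallVol d * r ^ d) with hq0
  have hinj : Set.InjOn a M := by
    intro z hz z' hz' hzz'
    by_contra hne
    exact (hdisj z hz z' hz' hne (a z) (hmem_a z)) (hzz' ▸ hmem_a z')
  have haA : ∀ z ∈ M, pA (a z) := fun z hz => ⟨z, hz, rfl⟩
  have hbA : ∀ z ∈ M, ¬ pA (b z) := by
    intro z hz hmem
    obtain ⟨z', hz', hzz'⟩ := hmem
    by_cases hzeq : z' = z
    · subst hzeq
      exact hdiag z' hz' (by rw [hab z', ← hzz']; exact Sym2.mk_isDiag_iff.2 rfl)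
    · exact (hdisj z hz z' hz' (fun h => hzeq h.symm) (b z) (hmem_b z)) (hzz' ▸ hmem_a z')
  have hcard : Fintype.card {i // pA i} = M.card := by
    rw [Fintype.card_subtype]
    have himg : Finset.univ.filter pA = M.image a := by
      ext i
      simp only [Finset.mem_filter, Finset.mem_univ, true_and, Finset.mem_image, hpA]
    rw [himg, Finset.card_image_of_injOn hinj]
  have MP := measurePreserving_piEquivPiSubtypeProd (fun _ : Fin n => unifCube d) pA
  set φ := MeasurableEquiv.piEquivPiSubtypeProd (fun _ : Fin n => (Fin d → ℝ)) pA with hφ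
  set E := {X : Fin n → (Fin d → ℝ) | ∀ pr ∈ M, pairWeight X pr < r} with hE
  have hpw : ∀ (X : Fin n → (Fin d → ℝ)) (z : Sym2 (Fin n)),
      pairWeight X z = eucDist (X (a z)) (X (b z)) := by
    intro X z
    conv_lhs => rw [hab z]
    exact pairWeight_mk X (a z) (b z)
  have hEmeas : MeasurableSet E := by
    have hEeq : E = ⋂ pr ∈ M, {X : Fin n → (Fin d → ℝ) | eucDist (X (a pr)) (X (b pr)) < r} := by
      ext X; simp only [hE, Set.mem_setOf_eq, Set.mem_iInter]
      exact ⟨fun h pr hpr => hpw X pr ▸ h pr hpr, fun h pr hpr => (hpw X pr).symm ▸ h pr hpr⟩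
    rw [hEeq]
    refine MeasurableSet.biInter M.countable_toSet fun pr _ => ?_
    have hcont : Continuous fun X : Fin n → (Fin d → ℝ) => eucDist (X (a pr)) (X (b pr)) :=
      Real.continuous_sqrt.comp <| continuous_finset_sum _ fun i _ => by fun_prop
    exact (isOpen_lt hcont continuous_const).measurableSet
  have hS : MeasurableSet (φ.symm ⁻¹' E) := φ.symm.measurable hEmeas
  have key := (MP.symm φ).measure_preimage hEmeas.nullMeasurableSet
  rw [← key, Measure.prod_apply_symm hS]
  refine le_trans (lintegral_mono fun Y => ?_)
    (le_of_eq (by rw [lintegral_const, measure_univ, mul_one]))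
  show _ ≤ q0 ^ M.card
  set pick : {i // pA i} → Sym2 (Fin n) := fun i => Classical.choose i.2 with hpick
  have hpickspec : ∀ i : {i // pA i}, pick i ∈ M ∧ a (pick i) = i.1 := fun i => by
    obtain ⟨h1, h2⟩ := Classical.choose_spec i.2
    exact ⟨h1, h2⟩
  set t : {i // pA i} → Set (Fin d → ℝ) := fun i =>
    {xx | eucDist xx (Y ⟨b (pick i), hbA _ (hpickspec i).1⟩) < r} with ht
  have hsub : ((fun u => (u, Y)) ⁻¹' (φ.symm ⁻¹' E)) ⊆ Set.pi Set.univ t := by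
    intro u hu i _
    have hZ : ∀ j : Fin n, φ.symm (u, Y) j
        = if h : pA j then u ⟨j, h⟩ else Y ⟨j, h⟩ := fun j => rfl
    have hmain := hu (pick i) (hpickspec i).1
    rw [hpw] at hmain
    rw [hZ (a (pick i)), hZ (b (pick i))] at hmain
    rw [dif_pos (haA _ (hpickspec i).1), dif_neg (hbA _ (hpickspec i).1)] at hmain
    have heq : (⟨a (pick i), haA _ (hpickspec i).1⟩ : {i // pA i}) = i :=
      Subtype.ext (hpickspec i).2
    rw [heq] at hmain
    exact hmain
  refine le_trans (measure_mono hsub) ?_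
  rw [Measure.pi_pi]
  refine le_trans (Finset.prod_le_prod' fun i _ => unifCube_ball_le hd _ hr) ?_
  rw [Finset.prod_const, Finset.card_univ, hcard]

lemma extract_matching {d n : ℕ} {r : ℝ} (hr : 0 < r)
    (X : Fin n → (Fin d → ℝ)) (e : Sym2 (Fin n) → Bool)
    (v : Fin n) (c : (graphOf e).Walk v v) (hc : c.IsHamiltonianCycle)
    (hcost : walkCost (pairWeight X) c < n * r / 4) :
    ∃ M : Finset (Sym2 (Fin n)), M.card = 3 * (n - 1) / 8 ∧
      (∀ pr ∈ M, ¬ pr.IsDiag) ∧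
      (∀ pr ∈ M, ∀ pr' ∈ M, pr ≠ pr' → ∀ u : Fin n, u ∈ pr → u ∉ pr') ∧
      (∀ pr ∈ M, pairWeight X pr < r ∧ e pr = true) := by
  classical
  set w : Sym2 (Fin n) → ℝ := pairWeight X with hwdef
  set u : ℕ → Fin n := fun i => c.getVert i with hu
  have hn : c.length = n := hc.length_eq.trans (Fintype.card_fin n)
  have hcost' : ∑ i ∈ Finset.range n, w s(u i, u (i+1)) < n * r / 4 :=
    calc ∑ i ∈ Finset.range n, w s(u i, u (i+1)) = walkCost w c := by
          rw [walkCost_eq_sum w c, hn]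
      _ < _ := hcost
  set LONG := (Finset.range n).filter (fun i => r ≤ w s(u i, u (i+1))) with hLONG
  have hlong : 4 * LONG.card < n := by
    have hnpos : 0 < n := Fin.pos v
    have h2 : ∑ i ∈ LONG, w s(u i, u (i+1)) ≤ ∑ i ∈ Finset.range n, w s(u i, u (i+1)) :=
      Finset.sum_le_sum_of_subset_of_nonneg (Finset.filter_subset _ _)
        (fun i _ _ => pairWeight_nonneg X _)
    have h3 : (LONG.card : ℝ) * r < (n : ℝ) * r / 4 := by
      have h1 := Finset.card_nsmul_le_sum LONG (fun i => w s(u i, u (i+1))) r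
        (fun i hi => (Finset.mem_filter.1 hi).2)
      rw [nsmul_eq_mul] at h1
      exact (h1.trans h2).trans_lt hcost'
    have h4 : (4 * LONG.card : ℝ) < n := by
      rw [div_eq_mul_inv] at h3
      nlinarith
    exact_mod_cast h4
  set S := (Finset.range (n-1)).filter (fun i => w s(u i, u (i+1)) < r) with hSdef
  have hS : n - 1 ≤ S.card + LONG.card := by
    have hsub2 : Finset.range (n-1) ⊆ S ∪ LONG := by
      intro i hi
      by_cases hw : w s(u i, u (i+1)) < r
      · exact Finset.mem_union_left _ (Finset.mem_filter.2 ⟨hi, hw⟩)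
      · refine Finset.mem_union_right _ (Finset.mem_filter.2 ⟨Finset.mem_range.2 ?_, not_lt.1 hw⟩)
        have := Finset.mem_range.1 hi; omega
    calc n - 1 = (Finset.range (n-1)).card := (Finset.card_range _).symm
      _ ≤ (S ∪ LONG).card := Finset.card_le_card hsub2
      _ ≤ S.card + LONG.card := Finset.card_union_le _ _
  set SA := S.filter (fun i => i % 2 = 0) with hSA
  set SB := S.filter (fun i => ¬ i % 2 = 0) with hSB
  have hABcard : S.card ≤ SA.card + SB.card := by
    refine le_trans (Finset.card_le_card (fun i hi => ?_)) (Finset.card_union_le SA SB)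
    by_cases hp : i % 2 = 0
    · exact Finset.mem_union_left _ (Finset.mem_filter.2 ⟨hi, hp⟩)
    · exact Finset.mem_union_right _ (Finset.mem_filter.2 ⟨hi, hp⟩)
  set m := 3 * (n-1) / 8 with hm
  have hchoice : m ≤ SA.card ∨ m ≤ SB.card := by omega
  obtain ⟨T0, hT0sub, hT0par⟩ : ∃ T0 : Finset ℕ, (m ≤ T0.card ∧ T0 ⊆ S) ∧
      (∀ i ∈ T0, ∀ j ∈ T0, i % 2 = j % 2) := by
    rcases hchoice with h | h
    · exact ⟨SA, ⟨h, Finset.filter_subset _ _⟩, fun i hi j hj => by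
        have := (Finset.mem_filter.1 hi).2; have := (Finset.mem_filter.1 hj).2; omega⟩
    · exact ⟨SB, ⟨h, Finset.filter_subset _ _⟩, fun i hi j hj => by
        have := (Finset.mem_filter.1 hi).2; have := (Finset.mem_filter.1 hj).2; omega⟩
  obtain ⟨T, hTsub, hTcard⟩ := Finset.exists_subset_card_eq hT0sub.1
  have hTS : T ⊆ S := hTsub.trans hT0sub.2
  have hTrange : ∀ i ∈ T, i < n - 1 := fun i hi =>
    Finset.mem_range.1 (Finset.mem_of_mem_filter i (hTS hi))
  have hTpar : ∀ i ∈ T, ∀ j ∈ T, i % 2 = j % 2 := fun i hi j hj =>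
    hT0par i (hTsub hi) j (hTsub hj)
  have hTshort : ∀ i ∈ T, w s(u i, u (i+1)) < r := fun i hi =>
    (Finset.mem_filter.1 (hTS hi)).2
  have huinj : ∀ {i j : ℕ}, i < n → j < n → u i = u j → i = j := by
    intro i j hi hj hij
    exact hamCycle_getVert_inj hc (by omega : i < c.length) (by omega : j < c.length) hij
  have hipos : ∀ i ∈ T, i + 1 < n := fun i hi => by have := hTrange i hi; omega
  set f : ℕ → Sym2 (Fin n) := fun i => s(u i, u (i+1)) with hf
  have hfinj : Set.InjOn f T := by
    intro i hi j hj hij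
    rw [hf] at hij
    simp only [Sym2.eq_iff] at hij
    have hi1 := hipos i hi
    have hj1 := hipos j hj
    rcases hij with ⟨h1, _⟩ | ⟨h1, h2⟩
    · exact huinj (by omega) (by omega) h1
    · have e1 := huinj (by omega) (by omega) h1
      have e2 := huinj (by omega) (by omega) h2
      omega
  refine ⟨T.image f, ?_, ?_, ?_, ?_⟩
  · rw [Finset.card_image_of_injOn hfinj, hTcard]
  · intro pr hpr
    obtain ⟨i, hi, rfl⟩ := Finset.mem_image.1 hpr
    rw [hf, Sym2.mk_isDiag_iff]
    intro hdiag
    have := huinj (by have := hipos i hi; omega) (hipos i hi) hdiag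
    omega
  · intro pr hpr pr' hpr' hne z hz hz'
    obtain ⟨i, hi, rfl⟩ := Finset.mem_image.1 hpr
    obtain ⟨j, hj, rfl⟩ := Finset.mem_image.1 hpr'
    have hij : i ≠ j := fun h => hne (by rw [h])
    have hpar := hTpar i hi j hj
    have hi1 := hipos i hi
    have hj1 := hipos j hj
    rw [hf] at hz hz'
    rw [Sym2.mem_iff] at hz hz'
    rcases hz with rfl | rfl <;> rcases hz' with h | h
    · exact hij (huinj (by omega) (by omega) h)
    · have := huinj (by omega) (by omega) h; omega
    · have := huinj (by omega) (by omega) h; omega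
    · have := huinj (by omega) (by omega) h; omega
  · intro pr hpr
    obtain ⟨i, hi, rfl⟩ := Finset.mem_image.1 hpr
    refine ⟨hTshort i hi, ?_⟩
    have hadj : (graphOf e).Adj (u i) (u (i+1)) := by
      have hlt : i < c.length := by rw [hn]; have := hipos i hi; omega
      exact c.adj_getVert_succ hlt
    exact (show u i ≠ u (i+1) ∧ e s(u i, u (i+1)) = true from hadj).2

lemma count_bound {n m N : ℕ} (hm : 0 < m) (hn : 0 < n) (hN2 : 2 * N = n * (n+1))
    (hmn : 5 * (n+1) ≤ 16 * m) {s : ℝ} (hs0 : 0 ≤ s)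
    (hs : s * (2 * Real.exp 1 * n) ≤ 1) :
    (N.choose m : ℝ) * s ^ m ≤ (4/5 : ℝ) ^ m := by
  have hE1 : (0:ℝ) < Real.exp 1 := Real.exp_pos 1
  have hfacpos : (0:ℝ) < m.factorial := by exact_mod_cast m.factorial_pos
  have hnR : (0:ℝ) < n := by exact_mod_cast hn
  have hmR : (0:ℝ) < m := by exact_mod_cast hm
  have h1 : (N.choose m : ℝ) ≤ (N:ℝ)^m / m.factorial := by
    rw [le_div_iff₀ hfacpos]
    have h := N.descFactorial_le_pow m
    rw [Nat.descFactorial_eq_factorial_mul_choose] at h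
    have h' : (m.factorial : ℝ) * N.choose m ≤ (N:ℝ)^m := by exact_mod_cast h
    linarith [h']
  have hsle : s ≤ 1 / (2 * Real.exp 1 * n) := by
    rw [le_div_iff₀ (by positivity)]
    exact hs
  have h2 : s ^ m ≤ (1 / (2 * Real.exp 1 * n)) ^ m := pow_le_pow_left₀ hs0 hsle m
  have h3 : (1:ℝ) / m.factorial ≤ Real.exp 1 ^ m / (m:ℝ)^m := by
    rw [div_le_div_iff₀ hfacpos (by positivity)]
    have := pow_self_le_exp_mul_factorial m
    linarith
  have hNnn : (0:ℝ) ≤ (N:ℝ) := Nat.cast_nonneg N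
  calc (N.choose m : ℝ) * s ^ m
      ≤ ((N:ℝ)^m / m.factorial) * (1 / (2 * Real.exp 1 * n)) ^ m := by
        apply mul_le_mul h1 h2 (pow_nonneg hs0 m) (by positivity)
    _ = ((N:ℝ) * (1 / (2 * Real.exp 1 * n)))^m * (1 / m.factorial) := by
        rw [mul_pow]; ring
    _ ≤ ((N:ℝ) * (1 / (2 * Real.exp 1 * n)))^m * (Real.exp 1 ^ m / (m:ℝ)^m) := by
        apply mul_le_mul_of_nonneg_left h3 (by positivity)
    _ = ((N:ℝ) * (1 / (2 * Real.exp 1 * n)) * (Real.exp 1 / m))^m := by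
        rw [← div_pow, ← mul_pow]
    _ = ((N:ℝ) / (2 * (n:ℝ) * m))^m := by
        congr 1
        field_simp
    _ ≤ (4/5 : ℝ)^m := by
        apply pow_le_pow_left₀ (by positivity)
        rw [div_le_div_iff₀ (by positivity) (by norm_num)]
        have c1 : 2*(N:ℝ) = n*(n+1) := by exact_mod_cast hN2
        have c2 : 5*((n:ℝ)+1) ≤ 16*m := by exact_mod_cast hmn
        nlinarith

lemma tail_bound (K : ℝ) (hK : 0 < K) :
    ∃ c : ℝ, 0 < c ∧ ∃ n₀ : ℕ, 32 ≤ n₀ ∧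
      (∀ n : ℕ, 1 ≤ n → n < n₀ → (1:ℝ) ≤ c * (n:ℝ)^(-K)) ∧
      (∀ n : ℕ, n₀ ≤ n → (4/5:ℝ)^(3*(n-1)/8) ≤ c * (n:ℝ)^(-K)) := by
  set ρ : ℝ := (4/5:ℝ)^((1:ℝ)/8) with hρ
  have hρ0 : 0 < ρ := Real.rpow_pos_of_pos (by norm_num) _
  have hρ1 : ρ < 1 := Real.rpow_lt_one (by norm_num) (by norm_num) (by norm_num)
  have hρ8 : ρ ^ (8:ℕ) = 4/5 := by
    rw [hρ, ← Real.rpow_natCast (((4:ℝ)/5)^((1:ℝ)/8)) 8, ← Real.rpow_mul (by norm_num)]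
    norm_num
  set K' : ℕ := ⌈K⌉₊ with hK'
  have htend : Tendsto (fun n : ℕ => (n:ℝ)^K' * ρ^n) atTop (nhds 0) :=
    tendsto_pow_const_mul_const_pow_of_lt_one K' hρ0.le hρ1
  have hev : ∀ᶠ n : ℕ in atTop, (n:ℝ)^K' * ρ^n ≤ 1 :=
    htend.eventually_le_const (by norm_num)
  obtain ⟨n₁, hn₁⟩ := eventually_atTop.1 hev
  set n₀ : ℕ := max n₁ 32 with hn₀
  set c : ℝ := max 1 ((n₀:ℝ)^(K)) + (ρ⁻¹)^(8:ℕ) with hc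
  have hρinv : (0:ℝ) < (ρ⁻¹)^(8:ℕ) := by positivity
  have hc1 : (1:ℝ) ≤ c := by
    rw [hc]
    calc (1:ℝ) ≤ max 1 ((n₀:ℝ)^K) := le_max_left _ _
      _ ≤ _ := le_add_of_nonneg_right hρinv.le
  have hcpos : 0 < c := lt_of_lt_of_le one_pos hc1
  refine ⟨c, hcpos, n₀, le_max_right _ _, ?_, ?_⟩
  · intro n h1 h2
    have hn0 : (0:ℝ) < n := by exact_mod_cast h1
    have hnn : (n:ℝ) ≤ n₀ := by exact_mod_cast h2.le
    have hx : (n:ℝ)^K ≤ (n₀:ℝ)^K :=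
      Real.rpow_le_rpow hn0.le hnn hK.le
    have hx2 : (n:ℝ)^K ≤ c := by
      rw [hc]
      calc (n:ℝ)^K ≤ (n₀:ℝ)^K := hx
        _ ≤ max 1 ((n₀:ℝ)^K) := le_max_right _ _
        _ ≤ _ := le_add_of_nonneg_right hρinv.le
    have hid : (n:ℝ)^K * (n:ℝ)^(-K) = 1 := by
      rw [← Real.rpow_add hn0]; simp
    calc (1:ℝ) = (n:ℝ)^K * (n:ℝ)^(-K) := hid.symm
      _ ≤ c * (n:ℝ)^(-K) := by
          apply mul_le_mul_of_nonneg_right hx2 (Real.rpow_nonneg hn0.le _)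
  · intro n hn
    have h32 : 32 ≤ n := le_trans (le_max_right _ _) hn
    have hn1' : n₁ ≤ n := le_trans (le_max_left _ _) hn
    have hnpos : (0:ℝ) < n := by
      have h1n : (1:ℕ) ≤ n := by omega
      exact_mod_cast Nat.lt_of_lt_of_le Nat.zero_lt_one h1n
    set m : ℕ := 3*(n-1)/8 with hm
    have h8m : n ≤ 8 * m := by omega
    have step1 : (4/5:ℝ)^m = ρ^(8*m) := by
      rw [pow_mul, hρ8]
    have step2 : ρ^(8*m) ≤ ρ^n := pow_le_pow_of_le_one hρ0.le hρ1.le h8m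
    have step3 : ρ^n ≤ ((n:ℝ)^K')⁻¹ := by
      have h := hn₁ n hn1'
      rw [← le_div_iff₀' (by positivity)] at h
      simpa [one_div] using h
    have step4 : ((n:ℝ)^K')⁻¹ ≤ (n:ℝ)^(-K) := by
      rw [← Real.rpow_natCast (n:ℝ) K', ← Real.rpow_neg hnpos.le]
      apply Real.rpow_le_rpow_of_exponent_le (by exact_mod_cast h32.trans' (by norm_num))
      have : K ≤ (K' : ℝ) := Nat.le_ceil K
      linarith
    calc (4/5:ℝ)^(3*(n-1)/8) = ρ^(8*m) := step1
      _ ≤ ρ^n := step2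
      _ ≤ ((n:ℝ)^K')⁻¹ := step3
      _ ≤ (n:ℝ)^(-K) := step4
      _ ≤ c * (n:ℝ)^(-K) := by
          nlinarith [Real.rpow_nonneg hnpos.le (-K), Real.rpow_pos_of_pos hnpos (-K)]

lemma r_pow_d (d : ℕ) (hd : 1 ≤ d) {p nn v : ℝ} (hp : 0 < p) (hn : 0 < nn) :
    (Real.exp (-v) / ((p * nn) ^ (1/(d:ℝ)))) ^ d = Real.exp (-(d:ℝ) * v) / (p * nn) := by
  have hpn : 0 < p * nn := mul_pos hp hn
  have hd0 : (d:ℝ) ≠ 0 := by positivity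
  rw [div_pow, ← Real.rpow_natCast ((p*nn)^(1/(d:ℝ))) d, ← Real.rpow_mul hpn.le,
    one_div, inv_mul_cancel₀ hd0, Real.rpow_one]
  congr 1
  rw [← Real.exp_nat_mul]
  ring_nf

lemma L_eq (d : ℕ) (hd : 1 ≤ d) {p v : ℝ} (n : ℕ) (hp : 0 < p) (hn : 1 ≤ n) :
    Real.exp (-v) * (n:ℝ) ^ (((d:ℝ) - 1)/(d:ℝ)) / (4 * p ^ (1/(d:ℝ)))
      = (n:ℝ) * (Real.exp (-v) / ((p * (n:ℝ)) ^ (1/(d:ℝ)))) / 4 := by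
  have hd0 : (d:ℝ) ≠ 0 := by positivity
  have hn0 : (0:ℝ) < n := by exact_mod_cast hn
  have hp1d : (0:ℝ) < p ^ (1/(d:ℝ)) := Real.rpow_pos_of_pos hp _
  have hn1d : (0:ℝ) < (n:ℝ) ^ (1/(d:ℝ)) := Real.rpow_pos_of_pos hn0 _
  have hmul : (p*(n:ℝ))^(1/(d:ℝ)) = p^(1/(d:ℝ)) * (n:ℝ)^(1/(d:ℝ)) :=
    Real.mul_rpow hp.le hn0.le
  have hnsplit : (n:ℝ)^(((d:ℝ)-1)/(d:ℝ)) * (n:ℝ)^((1:ℝ)/(d:ℝ)) = n := by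
    rw [← Real.rpow_add hn0, show ((d:ℝ)-1)/(d:ℝ) + 1/(d:ℝ) = 1 by field_simp; ring,
      Real.rpow_one]
  rw [hmul]
  field_simp
  linear_combination hnsplit

/-- Quite surely, every Hamiltonian cycle of `𝒳_{n,p}` (if one exists) has total weight at
least `e^{−ν_d} n^{(d−1)/d} / (4 p^{1/d})`. -/
theorem tsp_lower_bound_qs (d : ℕ) (hd : 2 ≤ d) (p : ℕ → ℝ)
    (hp : ∀ n, 0 < p n ∧ p n ≤ 1) :
    ∀ K : ℝ, 0 < K → ∃ c : ℝ, 0 < c ∧ ∀ n : ℕ, 1 ≤ n →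
      XMeasure d n (p n)
        {x | ¬ ∀ (v : Fin n) (cyc : (graphOf x.2).Walk v v), cyc.IsHamiltonianCycle →
          Real.exp (-unitBallVol d) * (n : ℝ) ^ ((d - 1 : ℝ) / d) /
              (4 * (p n) ^ (1 / (d : ℝ))) ≤
            walkCost (pairWeight x.1) cyc}
        ≤ ENNReal.ofReal (c * (n : ℝ) ^ (-K)) := by
  intro K hK
  obtain ⟨c, hcpos, n₀, hn₀32, hsmall, hbig⟩ := tail_bound K hK
  refine ⟨c, hcpos, ?_⟩
  intro n hn1
  by_cases hcase : n < n₀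
  · refine le_trans prob_le_one ?_
    rw [← ENNReal.ofReal_one]
    exact ENNReal.ofReal_le_ofReal (hsmall n hn1 hcase)
  · push_neg at hcase
    classical
    obtain ⟨hp0, hp1⟩ := hp n
    have h32 : 32 ≤ n := hn₀32.trans hcase
    have hd1 : 1 ≤ d := by omega
    have hn0R : (0:ℝ) < n := by exact_mod_cast hn1
    set ν : ℝ := unitBallVol d with hν
    have hν0 : 0 ≤ ν := ENNReal.toReal_nonneg
    set r : ℝ := Real.exp (-ν) / ((p n * (n:ℝ)) ^ (1/(d:ℝ))) with hrdef
    have hr0 : 0 < r := div_pos (Real.exp_pos _) (Real.rpow_pos_of_pos (by positivity) _)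
    set m : ℕ := 3 * (n-1) / 8 with hmdef
    set s₀ : ℝ := ν * r ^ d * p n with hs₀
    have hs₀0 : 0 ≤ s₀ := by positivity
    have hrd : r ^ d = Real.exp (-(d:ℝ) * ν) / (p n * (n:ℝ)) := by
      rw [hrdef]; exact r_pow_d d hd1 hp0 hn0R
    have hLr : Real.exp (-ν) * (n:ℝ) ^ (((d:ℝ) - 1)/(d:ℝ)) / (4 * (p n) ^ (1/(d:ℝ)))
        = (n:ℝ) * r / 4 := by
      rw [hrdef]; exact L_eq d hd1 n hp0 hn1
    set Valid : Finset (Sym2 (Fin n)) → Prop := fun M =>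
      (∀ pr ∈ M, ¬ pr.IsDiag) ∧
      (∀ pr ∈ M, ∀ pr' ∈ M, pr ≠ pr' → ∀ u : Fin n, u ∈ pr → u ∉ pr') with hValid
    set F : Finset (Sym2 (Fin n)) → Set ((Fin n → (Fin d → ℝ)) × (Sym2 (Fin n) → Bool)) :=
      fun M => if Valid M then {x | ∀ pr ∈ M, pairWeight x.1 pr < r ∧ x.2 pr = true}
        else ∅ with hF
    set 𝓜 := Finset.powersetCard m (Finset.univ : Finset (Sym2 (Fin n))) with h𝓜
    have hsub : {x : (Fin n → (Fin d → ℝ)) × (Sym2 (Fin n) → Bool) |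
        ¬ ∀ (v : Fin n) (cyc : (graphOf x.2).Walk v v), cyc.IsHamiltonianCycle →
          Real.exp (-ν) * (n : ℝ) ^ ((d - 1 : ℝ) / d) /
              (4 * (p n) ^ (1 / (d : ℝ))) ≤
            walkCost (pairWeight x.1) cyc} ⊆ ⋃ M ∈ 𝓜, F M := by
      intro x hx
      simp only [Set.mem_setOf_eq] at hx
      push_neg at hx
      obtain ⟨v, cyc, hham, hlt⟩ := hx
      rw [hLr] at hlt
      obtain ⟨M, hMcard, hMdiag, hMdisj, hMprop⟩ :=
        extract_matching hr0 x.1 x.2 v cyc hham hlt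
      have hMmem : M ∈ 𝓜 := by
        rw [h𝓜, Finset.mem_powersetCard]
        exact ⟨Finset.subset_univ M, hMcard⟩
      refine Set.mem_biUnion hMmem ?_
      rw [hF]
      simp only
      rw [if_pos ⟨hMdiag, hMdisj⟩]
      exact hMprop
    have perM : ∀ M ∈ 𝓜, XMeasure d n (p n) (F M) ≤ ENNReal.ofReal s₀ ^ m := by
      intro M hM
      have hMcard : M.card = m := (Finset.mem_powersetCard.1 hM).2
      by_cases hval : Valid M
      · have hFM : F M = {X : Fin n → (Fin d → ℝ) | ∀ pr ∈ M, pairWeight X pr < r}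
            ×ˢ {e : Sym2 (Fin n) → Bool | ∀ pr ∈ M, e pr = true} := by
          rw [hF]
          simp only
          rw [if_pos hval]
          ext x
          simp only [Set.mem_setOf_eq, Set.mem_prod]
          exact ⟨fun h => ⟨fun pr hpr => (h pr hpr).1, fun pr hpr => (h pr hpr).2⟩,
            fun h pr hpr => ⟨h.1 pr hpr, h.2 pr hpr⟩⟩
        have hXM : XMeasure d n (p n)
            = (Measure.pi fun _ : Fin n => unifCube d).prod
              (Measure.pi fun _ : Sym2 (Fin n) => bern (p n)) := rfl
        rw [hFM, hXM, Measure.prod_prod]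
        calc (Measure.pi fun _ : Fin n => unifCube d)
              {X : Fin n → (Fin d → ℝ) | ∀ pr ∈ M, pairWeight X pr < r}
              * (Measure.pi fun _ : Sym2 (Fin n) => bern (p n))
                {e : Sym2 (Fin n) → Bool | ∀ pr ∈ M, e pr = true}
            ≤ ENNReal.ofReal (unitBallVol d * r ^ d) ^ M.card * ENNReal.ofReal (p n) ^ M.card :=
              mul_le_mul' (pi_matching_le hd1 hr0.le M hval.1 hval.2) (bern_pi_le hp1 M)
          _ = (ENNReal.ofReal (unitBallVol d * r ^ d) * ENNReal.ofReal (p n)) ^ M.card :=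
              (mul_pow _ _ _).symm
          _ = ENNReal.ofReal s₀ ^ m := by
              rw [← ENNReal.ofReal_mul (by positivity), hMcard, hs₀, hν]
      · rw [hF]
        simp only
        rw [if_neg hval]
        simp
    have hs : s₀ * (2 * Real.exp 1 * n) ≤ 1 := by
      have hexpr : s₀ * (2 * Real.exp 1 * n) = ν * Real.exp (-(d:ℝ)*ν) * (2 * Real.exp 1) := by
        rw [hs₀, hrd]
        field_simp
      rw [hexpr]
      have hb := nu_exp_bound d hd ν hν0
      have he : (0:ℝ) < Real.exp 1 := Real.exp_pos 1
      rw [div_eq_mul_inv] at hb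
      calc ν * Real.exp (-(d:ℝ)*ν) * (2 * Real.exp 1)
          ≤ (1 * (2 * Real.exp 1)⁻¹) * (2 * Real.exp 1) := by
            apply mul_le_mul_of_nonneg_right hb (by positivity)
        _ = 1 := by field_simp
    have hN2 : 2 * Fintype.card (Sym2 (Fin n)) = n * (n+1) := by
      rw [Sym2.card, Fintype.card_fin, Nat.choose_two_right]
      simp only [Nat.add_sub_cancel]
      obtain ⟨k, hk⟩ := Nat.even_mul_succ_self n
      rw [mul_comm (n+1) n]
      omega
    have hm0 : 0 < m := by omega
    have hmn : 5 * (n+1) ≤ 16 * m := by omega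
    have hcount := count_bound hm0 (by omega : 0 < n) hN2 hmn hs₀0 hs
    calc XMeasure d n (p n) {x : (Fin n → (Fin d → ℝ)) × (Sym2 (Fin n) → Bool) |
            ¬ ∀ (v : Fin n) (cyc : (graphOf x.2).Walk v v), cyc.IsHamiltonianCycle →
              Real.exp (-ν) * (n : ℝ) ^ ((d - 1 : ℝ) / d) /
                  (4 * (p n) ^ (1 / (d : ℝ))) ≤
                walkCost (pairWeight x.1) cyc}
        ≤ XMeasure d n (p n) (⋃ M ∈ 𝓜, F M) := measure_mono hsub
      _ ≤ ∑ M ∈ 𝓜, XMeasure d n (p n) (F M) := measure_biUnion_finset_le _ _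
      _ ≤ 𝓜.card • (ENNReal.ofReal s₀ ^ m) := Finset.sum_le_card_nsmul _ _ _ perM
      _ = ((Fintype.card (Sym2 (Fin n))).choose m : ℝ≥0∞) * ENNReal.ofReal (s₀ ^ m) := by
          rw [nsmul_eq_mul, h𝓜, Finset.card_powersetCard, Finset.card_univ,
            ENNReal.ofReal_pow hs₀0]
      _ = ENNReal.ofReal (((Fintype.card (Sym2 (Fin n))).choose m : ℝ) * s₀ ^ m) := by
          rw [ENNReal.ofReal_mul (Nat.cast_nonneg _), ENNReal.ofReal_natCast]
      _ ≤ ENNReal.ofReal ((4/5 : ℝ) ^ m) := ENNReal.ofReal_le_ofReal hcount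
      _ ≤ ENNReal.ofReal (c * (n:ℝ) ^ (-K)) := ENNReal.ofReal_le_ofReal (hbig n hcase)

end
end

section
/- Let q = q(n) ∈ (0,1) satisfy nq / log n → ∞ as n → ∞. Then for every constant K > 0, the probability that the Erdős–Rényi random graph G_{n,q} contains a vertex set S with 1 ≤ |S| ≤ 1/(100q) whose external neighborhood satisfies |N(S)| < |S| n q / 100 is O(n^{−K}). -/
open MeasureTheory Filter Real ENNReal

noncomputable section

def wB (q : ℝ) : Bool → ℝ := fun b => if b then q else 1 - q

def Wt {n : ℕ} (q : ℝ) (x : Sym2 (Fin n) → Bool) : ℝ := ∏ e, wB q (x e)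

lemma wB_nonneg {q : ℝ} (h0 : 0 ≤ q) (h1 : q ≤ 1) (b : Bool) : 0 ≤ wB q b := by
  cases b <;> simp [wB] <;> linarith

lemma Wt_nonneg {n : ℕ} {q : ℝ} (h0 : 0 ≤ q) (h1 : q ≤ 1) (x : Sym2 (Fin n) → Bool) :
    0 ≤ Wt q x := Finset.prod_nonneg fun e _ => wB_nonneg h0 h1 _

lemma bern_singleton {q : ℝ} (h0 : 0 ≤ q) (h1 : q ≤ 1) (b : Bool) :
    bern q {b} = ENNReal.ofReal (wB q b) := by
  rw [bern, PMF.toMeasure_apply_singleton _ _ (measurableSet_singleton b)]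
  have hmin : min (Real.toNNReal q) 1 = Real.toNNReal q := by
    rw [min_eq_left]
    exact Real.toNNReal_le_one.2 h1
  cases b
  · simp only [PMF.bernoulli_apply, hmin, Bool.cond_false, wB, if_false]
    simp only [Bool.false_eq_true, if_false]
    rw [ENNReal.ofReal_sub _ h0, ENNReal.ofReal_one, ENNReal.coe_sub, ENNReal.coe_one]
    rfl
  · simp [PMF.bernoulli_apply, hmin, wB, ENNReal.ofReal]

lemma ER_singleton {n : ℕ} {q : ℝ} (h0 : 0 ≤ q) (h1 : q ≤ 1) (x : Sym2 (Fin n) → Bool) :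
    ERMeasure n q {x} = ENNReal.ofReal (Wt q x) := by
  rw [ERMeasure, ← Set.univ_pi_singleton x, Measure.pi_pi]
  rw [Wt, ENNReal.ofReal_prod_of_nonneg (fun e (_ : e ∈ Finset.univ) => wB_nonneg h0 h1 (x e))]
  exact Finset.prod_congr rfl fun e _ => bern_singleton h0 h1 (x e)

lemma ER_apply {n : ℕ} {q : ℝ} (h0 : 0 ≤ q) (h1 : q ≤ 1) (A : Set (Sym2 (Fin n) → Bool)) [Fintype A] :
    ERMeasure n q A = ENNReal.ofReal (∑ x ∈ A.toFinset, Wt q x) := by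
  classical
  have hA : A = ⋃ x ∈ A.toFinset, {x} := by
    ext y; simp
  rw [show (ERMeasure n q) A = (ERMeasure n q) (⋃ x ∈ A.toFinset, {x}) from by rw [← hA],
    measure_biUnion_finset ?disj ?meas]
  · rw [ENNReal.ofReal_sum_of_nonneg (fun x _ => Wt_nonneg h0 h1 x)]
    exact Finset.sum_congr rfl fun x _ => ER_singleton h0 h1 x
  case disj =>
    intro a _ b _ hab
    simp [Function.onFun, Set.disjoint_singleton, hab]
  case meas =>
    intro b _
    exact measurableSet_singleton b

lemma sum_pi_prod {ι κ : Type*} [Fintype ι] [DecidableEq ι] [Fintype κ] (f : ι → κ → ℝ) :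
    ∑ g : ι → κ, ∏ i, f i (g i) = ∏ i, ∑ j, f i j := by
  rw [Fintype.prod_sum]

lemma gen_factor {α β γ ε : Type*} [Fintype α] [Fintype β] [Fintype γ] [Fintype ε]
    [DecidableEq α] [DecidableEq β] [DecidableEq γ] [DecidableEq ε]
    (e : ((α × β) ⊕ γ) ≃ ε) (F : (β → Bool) → ℝ) (w' : Bool → ℝ) :
    ∑ x : ε → Bool, (∏ a : α, F (fun b => x (e (Sum.inl (a, b))))) *
        (∏ c : γ, w' (x (e (Sum.inr c))))
    = (∑ t : β → Bool, F t) ^ (Fintype.card α) * (∑ b : Bool, w' b) ^ (Fintype.card γ) := by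
  classical
  rw [← Equiv.sum_comp (Equiv.arrowCongr e (Equiv.refl Bool))]
  rw [Finset.sum_congr rfl fun z (_ : z ∈ Finset.univ) => show
      (∏ a : α, F fun b => (e.arrowCongr (Equiv.refl Bool)) z (e (Sum.inl (a, b)))) *
        ∏ c : γ, w' ((e.arrowCongr (Equiv.refl Bool)) z (e (Sum.inr c)))
      = (∏ a : α, F fun b => z (Sum.inl (a, b))) * ∏ c : γ, w' (z (Sum.inr c)) from by simp]
  rw [← Equiv.sum_comp (Equiv.sumArrowEquivProdArrow (α × β) γ Bool).symm]
  rw [Fintype.sum_prod_type]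
  simp only [Equiv.sumArrowEquivProdArrow_symm_apply_inl,
    Equiv.sumArrowEquivProdArrow_symm_apply_inr]
  rw [← Finset.sum_mul_sum]
  congr 1
  · rw [← Equiv.sum_comp (Equiv.curry α β Bool).symm]
    have h2 : ∀ (y : α → β → Bool) (a : α) (b : β),
        (Equiv.curry α β Bool).symm y (a, b) = y a b := fun y a b => rfl
    simp only [h2]
    have h3 := sum_pi_prod (fun (_ : α) (t : β → Bool) => F t)
    rw [h3, Finset.prod_const, Finset.card_univ]
  · have h4 := sum_pi_prod (fun (_ : γ) (b : Bool) => w' b)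
    rw [h4, Finset.prod_const, Finset.card_univ]

lemma factor {n : ℕ} (q : ℝ) (S : Finset (Fin n)) :
    ∑ x : Sym2 (Fin n) → Bool,
      (∏ v ∈ Sᶜ, (if ∃ u ∈ S, x s(u, v) = true then (1/100 : ℝ) else 1)) * Wt q x
    = (1/100 + (99/100) * (1 - q)^S.card) ^ Sᶜ.card := by
  classical
  set ψ : (↥Sᶜ × ↥S) → Sym2 (Fin n) := fun p => s(p.2.1, p.1.1) with hψdef
  have hψ : Function.Injective ψ := by
    rintro ⟨⟨v, hv⟩, ⟨u, hu⟩⟩ ⟨⟨v', hv'⟩, ⟨u', hu'⟩⟩ h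
    simp only [hψdef, Sym2.eq_iff] at h
    rcases h with ⟨h1, h2⟩ | ⟨h1, h2⟩
    · simp_all
    · exfalso
      rw [Finset.mem_compl] at hv'
      exact hv' (h1 ▸ hu)
  set e : ((↥Sᶜ × ↥S) ⊕ ↥(Set.range ψ)ᶜ) ≃ Sym2 (Fin n) :=
    (Equiv.sumCongr (Equiv.ofInjective ψ hψ) (Equiv.refl _)).trans (Equiv.Set.sumCompl _) with hedef
  have he1 : ∀ p, e (Sum.inl p) = ψ p := by
    intro p; simp [hedef]
  have he2 : ∀ c, e (Sum.inr c) = c.1 := by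
    intro c; simp [hedef]
  set F : (↥S → Bool) → ℝ :=
    fun t => (if ∃ u : ↥S, t u = true then (1/100 : ℝ) else 1) * ∏ u, wB q (t u) with hFdef
  have key : ∀ x : Sym2 (Fin n) → Bool,
      (∏ v ∈ Sᶜ, (if ∃ u ∈ S, x s(u, v) = true then (1/100 : ℝ) else 1)) * Wt q x
      = (∏ v : ↥Sᶜ, F (fun u => x (e (Sum.inl (v, u))))) *
          ∏ c : ↥(Set.range ψ)ᶜ, wB q (x (e (Sum.inr c))) := by
    intro x
    have h1 : Wt q x
        = (∏ v : ↥Sᶜ, ∏ u : ↥S, wB q (x (e (Sum.inl (v, u))))) *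
            ∏ c : ↥(Set.range ψ)ᶜ, wB q (x (e (Sum.inr c))) := by
      rw [Wt, ← Equiv.prod_comp e (fun e' => wB q (x e')), Fintype.prod_sum_type,
        Fintype.prod_prod_type]
    have h2 : (∏ v ∈ Sᶜ, (if ∃ u ∈ S, x s(u, v) = true then (1/100 : ℝ) else 1))
        = ∏ v : ↥Sᶜ, (if ∃ u : ↥S, x (e (Sum.inl (v, u))) = true then (1/100 : ℝ) else 1) := by
      rw [← Finset.prod_coe_sort Sᶜ]
      refine Finset.prod_congr rfl fun v _ => ?_
      have hiff : (∃ u ∈ S, x s(u, (v : Fin n)) = true)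
          ↔ (∃ u : ↥S, x (e (Sum.inl (v, u))) = true) := by
        simp only [he1, hψdef]
        try constructor
        all_goals try (rintro ⟨u, hu, h⟩; exact ⟨⟨u, hu⟩, h⟩)
        all_goals try (rintro ⟨⟨u, hu⟩, h⟩; exact ⟨u, hu, h⟩)
      rw [if_congr hiff rfl rfl]
    rw [h1, h2, ← mul_assoc, ← Finset.prod_mul_distrib]
    try rfl
  simp only [key]
  rw [gen_factor e F (wB q)]
  have hw1 : ∑ b : Bool, wB q b = 1 := by simp [wB]
  have hF : ∑ t : ↥S → Bool, F t = 1/100 + (99/100) * (1 - q)^S.card := by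
    have hsplit : ∀ t : ↥S → Bool,
        (if ∃ u : ↥S, t u = true then (1/100 : ℝ) else 1)
        = 1/100 + (if t = (fun _ => false) then (99/100 : ℝ) else 0) := by
      intro t
      by_cases h : ∃ u : ↥S, t u = true
      · rw [if_pos h, if_neg, add_zero]
        rintro rfl
        obtain ⟨u, hu⟩ := h
        simp at hu
      · rw [if_neg h, if_pos]
        · norm_num
        · funext u
          simpa using (not_exists.1 h u)
    simp only [hFdef, hsplit, add_mul]
    rw [Finset.sum_add_distrib]
    congr 1
    · rw [← Finset.mul_sum]
      have h3 := sum_pi_prod (fun (_ : ↥S) (b : Bool) => wB q b)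
      rw [h3]
      have hw2 : wB q true + wB q false = 1 := by simp [wB]
      simp [hw2]
    · have h5 : ∀ t : ↥S → Bool,
          (if t = (fun _ => false) then (99/100 : ℝ) else 0) * ∏ u, wB q (t u)
          = (if t = (fun _ => false) then (99/100 : ℝ) * ∏ u, wB q (t u) else 0) := by
        intro t
        by_cases h : t = (fun _ => false) <;> simp [h]
      simp only [h5]
      rw [Finset.sum_ite_eq' Finset.univ (fun _ : ↥S => false)
        (fun t => (99/100 : ℝ) * ∏ u, wB q (t u))]
      simp [wB, Finset.prod_const, Fintype.card_coe]
  rw [hF, hw1, one_pow, mul_one, Fintype.card_coe]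

lemma ES_bound {n : ℕ} {q : ℝ} (hq0 : 0 < q) (hq1 : q < 1) (S : Finset (Fin n)) :
    ERMeasure n q {x | (((Sᶜ.filter fun v => ∃ u ∈ S, x s(u, v) = true).card : ℝ)
        < (S.card : ℝ) * n * q / 100)}
    ≤ ENNReal.ofReal ((100 : ℝ) ^ ((S.card : ℝ) * n * q / 100) *
        (1/100 + (99/100) * (1 - q)^S.card) ^ Sᶜ.card) := by
  classical
  set m : ℝ := (S.card : ℝ) * n * q / 100 with hm
  set A : Set (Sym2 (Fin n) → Bool) :=
    {x | (((Sᶜ.filter fun v => ∃ u ∈ S, x s(u, v) = true).card : ℝ) < m)} with hA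
  haveI : Fintype A := Fintype.ofFinite A
  rw [ER_apply hq0.le hq1.le A]
  apply ENNReal.ofReal_le_ofReal
  have key : ∀ x ∈ A.toFinset, Wt q x ≤
      (100 : ℝ) ^ m * ((∏ v ∈ Sᶜ, (if ∃ u ∈ S, x s(u, v) = true then (1/100 : ℝ) else 1))
        * Wt q x) := by
    intro x hx
    rw [Set.mem_toFinset, hA, Set.mem_setOf_eq] at hx
    set d : ℕ := (Sᶜ.filter fun v => ∃ u ∈ S, x s(u, v) = true).card with hd
    have hprod : (∏ v ∈ Sᶜ, (if ∃ u ∈ S, x s(u, v) = true then (1/100 : ℝ) else 1))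
        = (1/100 : ℝ) ^ d := by
      rw [Finset.prod_ite (f := fun _ => (1/100 : ℝ)) (g := fun _ => (1 : ℝ)),
        Finset.prod_const, Finset.prod_const, one_pow, mul_one, hd]
    rw [hprod]
    have h100 : (100 : ℝ) ^ (d : ℝ) ≤ (100 : ℝ) ^ m :=
      Real.rpow_le_rpow_of_exponent_le (by norm_num) hx.le
    rw [Real.rpow_natCast] at h100
    have hWt := Wt_nonneg hq0.le hq1.le x
    have hpos : (0 : ℝ) < 100 ^ d := by positivity
    calc Wt q x = (100 ^ d * (1/100 : ℝ) ^ d) * Wt q x := by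
          rw [← mul_pow]; norm_num
      _ ≤ (100 : ℝ) ^ m * ((1/100 : ℝ) ^ d * Wt q x) := by
          rw [mul_assoc]
          apply mul_le_mul_of_nonneg_right h100
          positivity
  calc ∑ x ∈ A.toFinset, Wt q x
      ≤ ∑ x ∈ A.toFinset, (100 : ℝ) ^ m *
          ((∏ v ∈ Sᶜ, (if ∃ u ∈ S, x s(u, v) = true then (1/100 : ℝ) else 1)) * Wt q x) :=
        Finset.sum_le_sum key
    _ ≤ ∑ x : Sym2 (Fin n) → Bool, (100 : ℝ) ^ m *
          ((∏ v ∈ Sᶜ, (if ∃ u ∈ S, x s(u, v) = true then (1/100 : ℝ) else 1)) * Wt q x) := by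
        apply Finset.sum_le_sum_of_subset_of_nonneg (Finset.subset_univ _)
        intro x _ _
        have hWt := Wt_nonneg hq0.le hq1.le x
        have : (0:ℝ) ≤ ∏ v ∈ Sᶜ, (if ∃ u ∈ S, x s(u, v) = true then (1/100 : ℝ) else 1) := by
          apply Finset.prod_nonneg
          intro v _
          split <;> norm_num
        positivity
    _ = (100 : ℝ) ^ m * ∑ x : Sym2 (Fin n) → Bool,
          (∏ v ∈ Sᶜ, (if ∃ u ∈ S, x s(u, v) = true then (1/100 : ℝ) else 1)) * Wt q x := by
        rw [Finset.mul_sum]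
    _ = (100 : ℝ) ^ m * (1/100 + (99/100) * (1 - q)^S.card) ^ Sᶜ.card := by
        rw [factor]

lemma log100 : Real.log 100 ≤ 5 := by
  have e : (2.7 : ℝ) ≤ Real.exp 1 := by nlinarith [Real.exp_one_gt_d9]
  have h1 : (100 : ℝ) ≤ Real.exp 1 ^ (5 : ℕ) :=
    le_trans (by norm_num) (pow_le_pow_left₀ (by norm_num) e 5)
  have h2 : Real.exp 1 ^ (5 : ℕ) = Real.exp 5 := by
    rw [← Real.exp_nat_mul]; norm_num
  have h3 := Real.log_le_log (by norm_num : (0:ℝ) < 100) (h2 ▸ h1)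
  rwa [Real.log_exp] at h3

lemma NUM {q : ℝ} (n s : ℕ) (hq0 : 0 < q) (hq1 : q < 1) (hs1 : 1 ≤ s)
    (hsq : (s : ℝ) * q ≤ 1/100) (hnq : 1 ≤ (n : ℝ) * q) :
    (100 : ℝ) ^ ((s : ℝ) * n * q / 100) * (1/100 + (99/100) * (1 - q)^s) ^ (n - s)
      ≤ Real.exp (-(9/10) * s * (n * q)) := by
  set t : ℝ := (s : ℝ) * q with ht
  have hs0 : (0:ℝ) < (s:ℝ) := by exact_mod_cast Nat.lt_of_lt_of_le Nat.zero_lt_one hs1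
  have ht0 : 0 < t := mul_pos hs0 hq0
  have hr0 : (0:ℝ) ≤ (1 - q)^s := pow_nonneg (by linarith) s
  have h1 : (1 - q)^s ≤ Real.exp (-t) := by
    have hb : 1 - q ≤ Real.exp (-q) := by
      have := Real.add_one_le_exp (-q); linarith
    calc (1 - q)^s ≤ (Real.exp (-q))^s :=
          pow_le_pow_left₀ (by linarith) hb s
      _ = Real.exp (-q * s) := by rw [← Real.exp_nat_mul]; ring_nf
      _ = Real.exp (-t) := by rw [ht]; ring_nf
  have h2 : (1 + t) * (1 - q)^s ≤ 1 := by
    have ha : 1 + t ≤ Real.exp t := by have := Real.add_one_le_exp t; linarith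
    calc (1 + t) * (1 - q)^s ≤ Real.exp t * Real.exp (-t) := by
          apply mul_le_mul ha h1 hr0 (Real.exp_nonneg t)
      _ = 1 := by rw [← Real.exp_add]; simp
  set c : ℝ := 1/100 + (99/100) * (1 - q)^s with hc
  have hc0 : 0 < c := by positivity
  have h3 : c ≤ 1 - (24/25) * t := by
    have hr2 : (1 - q)^s ≤ 1 - t + t^2 := by nlinarith [sq_nonneg t, pow_pos ht0 3]
    rw [hc]; nlinarith
  have h5 : c ≤ Real.exp (-(24/25) * t) := by
    have := Real.add_one_le_exp (-(24/25) * t)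
    linarith
  -- s ≤ n
  have hsn : (s : ℝ) ≤ (n : ℝ) / 100 := by nlinarith
  have hsnn : s ≤ n := by
    have : (s : ℝ) ≤ (n : ℝ) := le_trans hsn (by
      have hn0 : (0:ℝ) ≤ (n:ℝ) := Nat.cast_nonneg n
      linarith)
    exact_mod_cast this
  have hcast : ((n - s : ℕ) : ℝ) = (n : ℝ) - s := by
    rw [Nat.cast_sub hsnn]
  have h6 : c ^ (n - s) ≤ Real.exp (-(24/25) * t * ((n:ℝ) - s)) := by
    calc c ^ (n - s) ≤ (Real.exp (-(24/25) * t)) ^ (n - s) :=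
          pow_le_pow_left₀ hc0.le h5 _
      _ = Real.exp (-(24/25) * t * ((n - s : ℕ) : ℝ)) := by
          rw [← Real.exp_nat_mul]; ring_nf
      _ = Real.exp (-(24/25) * t * ((n:ℝ) - s)) := by rw [hcast]
  have h7 : Real.exp (-(24/25) * t * ((n:ℝ) - s)) ≤ Real.exp (-(2376/2500) * (t * n)) := by
    apply Real.exp_le_exp.2
    have hn0 : (0:ℝ) ≤ (n:ℝ) := Nat.cast_nonneg n
    nlinarith
  have h9 : (100 : ℝ) ^ ((s : ℝ) * n * q / 100) ≤ Real.exp ((s:ℝ) * n * q / 20) := by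
    rw [Real.rpow_def_of_pos (by norm_num)]
    apply Real.exp_le_exp.2
    have hm0 : (0:ℝ) ≤ (s : ℝ) * n * q / 100 := by positivity
    calc Real.log 100 * ((s : ℝ) * n * q / 100) ≤ 5 * ((s : ℝ) * n * q / 100) := by
          apply mul_le_mul_of_nonneg_right log100 hm0
      _ = (s:ℝ) * n * q / 20 := by ring
  calc (100 : ℝ) ^ ((s : ℝ) * n * q / 100) * c ^ (n - s)
      ≤ Real.exp ((s:ℝ) * n * q / 20) * Real.exp (-(2376/2500) * (t * n)) := by
        apply mul_le_mul h9 (le_trans h6 h7) (by positivity) (Real.exp_nonneg _)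
    _ = Real.exp ((s:ℝ) * n * q / 20 + -(2376/2500) * (t * n)) := by rw [← Real.exp_add]
    _ ≤ Real.exp (-(9/10) * s * (n * q)) := by
        apply Real.exp_le_exp.2
        rw [ht]
        nlinarith [mul_nonneg (mul_nonneg (Nat.cast_nonneg s : (0:ℝ) ≤ s) (Nat.cast_nonneg n : (0:ℝ) ≤ n)) hq0.le]

lemma EV {n : ℕ} (x : Sym2 (Fin n) → Bool) (S : Finset (Fin n)) :
    {v : Fin n | v ∉ S ∧ ∃ u ∈ S, (graphOf x).Adj u v}.ncard
      = (Sᶜ.filter fun v => ∃ u ∈ S, x s(u, v) = true).card := by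
  classical
  have hset : {v : Fin n | v ∉ S ∧ ∃ u ∈ S, (graphOf x).Adj u v}
      = ↑(Sᶜ.filter fun v => ∃ u ∈ S, x s(u, v) = true) := by
    ext v
    simp only [Set.mem_setOf_eq, Finset.coe_filter, Finset.mem_compl, graphOf, ne_eq]
    constructor
    · rintro ⟨hv, u, hu, _, he⟩
      exact ⟨hv, u, hu, he⟩
    · rintro ⟨hv, u, hu, he⟩
      exact ⟨hv, u, hu, fun h => hv (h ▸ hu), he⟩
  rw [hset, Set.ncard_coe_finset]

lemma main_bound {n : ℕ} {q K : ℝ} (hq0 : 0 < q) (hq1 : q < 1) (hK : 0 < K) (hn3 : 3 ≤ n)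
    (hgrow : (2*K+7) * Real.log n ≤ n * q) :
    ERMeasure n q {x | ∃ S : Finset (Fin n), S.Nonempty ∧ (S.card : ℝ) ≤ 1 / (100 * q) ∧
      ({v : Fin n | v ∉ S ∧ ∃ u ∈ S, (graphOf x).Adj u v}.ncard : ℝ) <
        (S.card : ℝ) * n * q / 100}
    ≤ ENNReal.ofReal ((n : ℝ) ^ (-K)) := by
  classical
  have hn0 : (0:ℝ) < n := by
    have : (3:ℝ) ≤ n := by exact_mod_cast hn3
    linarith
  have hlog1 : 1 ≤ Real.log n := by
    have he : Real.exp 1 < n := by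
      have := Real.exp_one_lt_d9
      have h3 : (3:ℝ) ≤ n := by exact_mod_cast hn3
      linarith
    have h := Real.log_lt_log (Real.exp_pos 1) he
    rw [Real.log_exp] at h
    exact h.le
  have hnq1 : 1 ≤ (n:ℝ) * q := by nlinarith
  set f : ℕ → ℝ := fun j => if 1 ≤ j ∧ (j:ℝ) ≤ 1/(100*q)
    then Real.exp (-(9/10)*j*((n:ℝ)*q)) else 0 with hf
  have hf0 : ∀ j, 0 ≤ f j := by
    intro j
    rw [hf]
    dsimp only
    split
    · positivity
    · exact le_rfl
  set ES : Finset (Fin n) → Set (Sym2 (Fin n) → Bool) := fun S =>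
    {x | S.Nonempty ∧ (S.card : ℝ) ≤ 1 / (100 * q) ∧
      ({v : Fin n | v ∉ S ∧ ∃ u ∈ S, (graphOf x).Adj u v}.ncard : ℝ) <
        (S.card : ℝ) * n * q / 100} with hES
  have hEU : {x : Sym2 (Fin n) → Bool |
      ∃ S : Finset (Fin n), S.Nonempty ∧ (S.card : ℝ) ≤ 1 / (100 * q) ∧
      ({v : Fin n | v ∉ S ∧ ∃ u ∈ S, (graphOf x).Adj u v}.ncard : ℝ) <
        (S.card : ℝ) * n * q / 100} = ⋃ S, ES S := by
    ext x
    simp only [Set.mem_setOf_eq, Set.mem_iUnion, hES]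
  rw [hEU]
  have step1 : ∀ S : Finset (Fin n), ERMeasure n q (ES S) ≤ ENNReal.ofReal (f S.card) := by
    intro S
    by_cases hgood : S.Nonempty ∧ (S.card : ℝ) ≤ 1 / (100 * q)
    · obtain ⟨hne, hcard⟩ := hgood
      have hs1 : 1 ≤ S.card := hne.card_pos
      have hsq : (S.card : ℝ) * q ≤ 1/100 := by
        have h := (le_div_iff₀ (by positivity : (0:ℝ) < 100 * q)).1 hcard
        nlinarith
      have hsub : ES S ⊆ {x | (((Sᶜ.filter fun v => ∃ u ∈ S, x s(u, v) = true).card : ℝ)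
          < (S.card : ℝ) * n * q / 100)} := by
        intro x hx
        have := hx.2.2
        rwa [EV x S] at this
      calc ERMeasure n q (ES S)
          ≤ ERMeasure n q {x | (((Sᶜ.filter fun v => ∃ u ∈ S, x s(u, v) = true).card : ℝ)
              < (S.card : ℝ) * n * q / 100)} := measure_mono hsub
        _ ≤ ENNReal.ofReal ((100 : ℝ) ^ ((S.card : ℝ) * n * q / 100) *
              (1/100 + (99/100) * (1 - q)^S.card) ^ Sᶜ.card) := ES_bound hq0 hq1 S
        _ ≤ ENNReal.ofReal (f S.card) := by
            apply ENNReal.ofReal_le_ofReal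
            rw [hf]
            dsimp only
            rw [if_pos ⟨hs1, hcard⟩]
            have hcompl : Sᶜ.card = n - S.card := by
              rw [Finset.card_compl, Fintype.card_fin]
            rw [hcompl]
            exact NUM n S.card hq0 hq1 hs1 hsq hnq1
    · have hempty : ES S = ∅ :=
        Set.eq_empty_iff_forall_notMem.2 fun x hx => hgood ⟨hx.1, hx.2.1⟩
      rw [hempty]
      simp
  calc ERMeasure n q (⋃ S, ES S)
      ≤ ∑' S : Finset (Fin n), ERMeasure n q (ES S) := measure_iUnion_le _
    _ = ∑ S : Finset (Fin n), ERMeasure n q (ES S) := tsum_fintype _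
    _ ≤ ∑ S : Finset (Fin n), ENNReal.ofReal (f S.card) := Finset.sum_le_sum fun S _ => step1 S
    _ = ENNReal.ofReal (∑ S : Finset (Fin n), f S.card) :=
        (ENNReal.ofReal_sum_of_nonneg fun S _ => hf0 S.card).symm
    _ ≤ ENNReal.ofReal ((n : ℝ) ^ (-K)) := by
        apply ENNReal.ofReal_le_ofReal
        have hsum : ∑ S : Finset (Fin n), f S.card
            = ∑ j ∈ Finset.range (n + 1), (n.choose j) • f j := by
          rw [show (Finset.univ : Finset (Finset (Fin n))) = (Finset.univ : Finset (Fin n)).powerset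
            from (Finset.powerset_univ).symm]
          rw [Finset.sum_powerset_apply_card f]
          simp [Finset.card_univ, Fintype.card_fin]
        rw [hsum]
        have hterm : ∀ j ∈ Finset.range (n + 1), (n.choose j) • f j ≤ (n:ℝ) ^ (-(K+2)) := by
          intro j _
          rw [nsmul_eq_mul]
          by_cases hcond : 1 ≤ j ∧ (j:ℝ) ≤ 1/(100*q)
          · rw [hf]
            dsimp only
            rw [if_pos hcond]
            have hch : ((n.choose j : ℕ) : ℝ) ≤ (n:ℝ)^j := by
              have := Nat.choose_le_pow n j
              exact_mod_cast this
            have hnj : (n:ℝ)^j = Real.exp (j * Real.log n) := by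
              rw [← Real.exp_log hn0, ← Real.exp_nat_mul, Real.log_exp]
            calc ((n.choose j : ℕ) : ℝ) * Real.exp (-(9/10)*j*((n:ℝ)*q))
                ≤ (n:ℝ)^j * Real.exp (-(9/10)*j*((n:ℝ)*q)) := by
                  apply mul_le_mul_of_nonneg_right hch (Real.exp_nonneg _)
              _ = Real.exp (j * Real.log n + -(9/10)*j*((n:ℝ)*q)) := by
                  rw [hnj, ← Real.exp_add]
              _ ≤ Real.exp (-(K+2) * Real.log n) := by
                  apply Real.exp_le_exp.2
                  have hj1 : (1:ℝ) ≤ j := by exact_mod_cast hcond.1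
                  nlinarith [mul_le_mul_of_nonneg_left hgrow (by linarith : (0:ℝ) ≤ (j:ℝ)),
                    mul_nonneg (by linarith : (0:ℝ) ≤ (j:ℝ) - 1) (by nlinarith : (0:ℝ) ≤ (K+2) * Real.log n)]
              _ = (n:ℝ) ^ (-(K+2)) := by
                  rw [Real.rpow_def_of_pos hn0]; ring_nf
          · rw [hf]
            dsimp only
            rw [if_neg hcond, mul_zero]
            positivity
        calc ∑ j ∈ Finset.range (n + 1), (n.choose j) • f j
            ≤ ∑ j ∈ Finset.range (n + 1), (n:ℝ) ^ (-(K+2)) := Finset.sum_le_sum hterm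
          _ = ((n:ℕ) + 1 : ℝ) * (n:ℝ) ^ (-(K+2)) := by
              rw [Finset.sum_const, Finset.card_range, nsmul_eq_mul]
              push_cast
              ring
          _ ≤ (n:ℝ)^(2:ℕ) * (n:ℝ) ^ (-(K+2)) := by
              apply mul_le_mul_of_nonneg_right _ (by positivity)
              have : (3:ℝ) ≤ n := by exact_mod_cast hn3
              nlinarith
          _ = (n:ℝ) ^ (-K) := by
              rw [← Real.rpow_natCast (n:ℝ) 2, ← Real.rpow_add hn0]
              norm_num

/-- Vertex expansion of small sets in `G_{n,q}`: if `nq/log n → ∞`, then quite surely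
every vertex set `S` with `1 ≤ |S| ≤ 1/(100q)` has external neighborhood of size at least
`|S| n q / 100`. -/
theorem small_set_expansion (q : ℕ → ℝ) (hq : ∀ n, 0 < q n ∧ q n < 1)
    (hgrowth : Tendsto (fun n : ℕ => (n : ℝ) * q n / Real.log n) atTop atTop) :
    ∀ K : ℝ, 0 < K → ∃ c : ℝ, 0 < c ∧ ∀ n : ℕ, 1 ≤ n →
      ERMeasure n (q n)
        {x | ∃ S : Finset (Fin n), S.Nonempty ∧ (S.card : ℝ) ≤ 1 / (100 * q n) ∧
          ({v : Fin n | v ∉ S ∧ ∃ u ∈ S, (graphOf x).Adj u v}.ncard : ℝ) <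
            (S.card : ℝ) * n * q n / 100}
        ≤ ENNReal.ofReal (c * (n : ℝ) ^ (-K)) := by
  intro K hK
  have hev : ∀ᶠ n : ℕ in atTop, (2*K+7) ≤ (n : ℝ) * q n / Real.log n :=
    hgrowth.eventually_ge_atTop _
  obtain ⟨N₁, hN₁⟩ := Filter.eventually_atTop.1 hev
  set N₀ : ℕ := max N₁ 3 with hN₀
  have hN₀3 : 3 ≤ N₀ := le_max_right _ _
  refine ⟨(N₀ : ℝ) ^ (K : ℝ) + 1, by positivity, ?_⟩
  intro n hn1
  have hn0 : (0:ℝ) < n := by exact_mod_cast hn1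
  have hc1 : (1:ℝ) ≤ (N₀ : ℝ) ^ (K : ℝ) + 1 := by
    have : (0:ℝ) ≤ (N₀ : ℝ) ^ (K : ℝ) := Real.rpow_nonneg (by positivity) _
    linarith
  by_cases hn : n < N₀
  · have h2 : (1:ℝ) ≤ ((N₀:ℝ) ^ (K:ℝ) + 1) * (n:ℝ) ^ (-K) := by
      have hle : (n:ℝ) ^ (K:ℝ) ≤ (N₀:ℝ) ^ (K:ℝ) := by
        apply Real.rpow_le_rpow (le_of_lt hn0) _ hK.le
        exact_mod_cast hn.le
      have hprod : (n:ℝ) ^ (K:ℝ) * (n:ℝ) ^ (-K) = 1 := by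
        rw [← Real.rpow_add hn0]
        norm_num
      calc (1:ℝ) = (n:ℝ) ^ (K:ℝ) * (n:ℝ) ^ (-K) := hprod.symm
        _ ≤ ((N₀:ℝ) ^ (K:ℝ) + 1) * (n:ℝ) ^ (-K) := by
            apply mul_le_mul_of_nonneg_right _ (Real.rpow_nonneg hn0.le _)
            linarith
    calc ERMeasure n (q n) _ ≤ 1 := prob_le_one
      _ = ENNReal.ofReal 1 := ENNReal.ofReal_one.symm
      _ ≤ ENNReal.ofReal (((N₀:ℝ) ^ (K:ℝ) + 1) * (n:ℝ) ^ (-K)) := ENNReal.ofReal_le_ofReal h2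
  · push_neg at hn
    have hn3 : 3 ≤ n := le_trans hN₀3 hn
    have hlogpos : (0:ℝ) < Real.log n := by
      apply Real.log_pos
      have : (3:ℝ) ≤ n := by exact_mod_cast hn3
      linarith
    have hgrow : (2*K+7) * Real.log n ≤ (n:ℝ) * q n := by
      have h := hN₁ n (le_trans (le_max_left _ _) hn)
      calc (2*K+7) * Real.log n ≤ ((n:ℝ) * q n / Real.log n) * Real.log n := by
            apply mul_le_mul_of_nonneg_right h hlogpos.le
        _ = (n:ℝ) * q n := by field_simp
    calc ERMeasure n (q n) _ ≤ ENNReal.ofReal ((n:ℝ) ^ (-K)) :=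
          main_bound (hq n).1 (hq n).2 hK hn3 hgrow
      _ ≤ ENNReal.ofReal (((N₀:ℝ) ^ (K:ℝ) + 1) * (n:ℝ) ^ (-K)) := by
          apply ENNReal.ofReal_le_ofReal
          exact le_mul_of_one_le_left (Real.rpow_nonneg hn0.le _) hc1

end
end
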